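/- arXiv:1406.7467 — 4 statements merged into one kernel-verified Lean document; each statement's English description precedes it below -/
import Mathlib

section
/- Fix a prime p, an integer k ≥ 1, and let Γ(k) be the subgroup of the unitary group U(p^k) generated by all scalar matrices t·I with t ∈ ℂ, |t| = 1, together with the matrices A_0,…,A_{k−1}, B_0,…,B_{k−1}. Then every element x ∈ Γ(k) can be written in the form x = t · A_0^{a(0)}·…·A_{k−1}^{a(k−1)} · B_0^{b(0)}·…·B_{k−1}^{b(k−1)} for some t ∈ ℂ with |t| = 1 and exponent functions a, b : Fin k → Fin p, and this presentation is unique: if t·∏_i A_i^{a(i)}·∏_i B_i^{b(i)} = t′·∏_i A_i^{a′(i)}·∏_i B_i^{b′(i)} with |t| = |t′| = 1 and a, b, a′, b′ : Fin k → Fin p, then t = t′, a = a′ and b = b′. -/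
open Matrix

/-- ζ = exp(2πi/p). -/
noncomputable def zetaP (p : ℕ) : ℂ := Complex.exp (2 * (Real.pi : ℂ) * Complex.I / (p : ℂ))

/-- A_i : the diagonal matrix with (A_i)_{v,v} = ζ^{v(i)}. -/
noncomputable def AmatK (p k : ℕ) (i : Fin k) :
    Matrix (Fin k → Fin p) (Fin k → Fin p) ℂ :=
  Matrix.diagonal fun v => zetaP p ^ (v i : ℕ)

/-- B_i : the permutation matrix with (B_i)_{v,w} = 1 iff w agrees with v except
w(i) = v(i) + 1 (mod p). -/
def BmatK (p k : ℕ) [NeZero p] (i : Fin k) :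
    Matrix (Fin k → Fin p) (Fin k → Fin p) ℂ :=
  Matrix.of fun v w => if w = Function.update v i (v i + 1) then 1 else 0

/-- The ordered product A_0^{a(0)} · … · A_{k-1}^{a(k-1)}. -/
noncomputable def prodA (p k : ℕ) (a : Fin k → Fin p) :
    Matrix (Fin k → Fin p) (Fin k → Fin p) ℂ :=
  ((List.finRange k).map fun i => AmatK p k i ^ (a i : ℕ)).prod

/-- The ordered product B_0^{b(0)} · … · B_{k-1}^{b(k-1)}. -/
noncomputable def prodB (p k : ℕ) [NeZero p] (b : Fin k → Fin p) :
    Matrix (Fin k → Fin p) (Fin k → Fin p) ℂ :=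
  ((List.finRange k).map fun i => BmatK p k i ^ (b i : ℕ)).prod

/-- Γ(k): the subgroup of U(p^k) generated by the unit scalar matrices together with the
matrices A_0,…,A_{k-1}, B_0,…,B_{k-1}. -/
noncomputable def GammaK (p k : ℕ) [NeZero p] :
    Subgroup (Matrix.unitaryGroup (Fin k → Fin p) ℂ) :=
  Subgroup.closure
    { x | (∃ t : ℂ, ‖t‖ = 1 ∧
            (x : Matrix (Fin k → Fin p) (Fin k → Fin p) ℂ) = t • 1) ∨
          (∃ i, (x : Matrix (Fin k → Fin p) (Fin k → Fin p) ℂ) = AmatK p k i) ∨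
          (∃ i, (x : Matrix (Fin k → Fin p) (Fin k → Fin p) ℂ) = BmatK p k i) }

section Aux

variable (p k : ℕ) [NeZero p]

lemma zeta_pow_p : zetaP p ^ p = 1 :=
  (Complex.isPrimitiveRoot_exp p (NeZero.ne p)).pow_eq_one

lemma zeta_norm : ‖zetaP p‖ = 1 := by
  have h : (2 * (Real.pi : ℂ) * Complex.I / (p : ℂ)) =
      ((2 * Real.pi / p : ℝ) : ℂ) * Complex.I := by
    push_cast; ring
  rw [zetaP, h, Complex.norm_exp_ofReal_mul_I]

lemma zeta_ne_zero : zetaP p ≠ 0 := by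
  intro h
  have := zeta_norm p
  rw [h] at this
  simp at this

lemma zeta_val_add (x y : Fin p) :
    zetaP p ^ ((x + y : Fin p) : ℕ) = zetaP p ^ (x : ℕ) * zetaP p ^ (y : ℕ) := by
  rw [Fin.val_add, ← pow_eq_pow_mod _ (zeta_pow_p p), pow_add]

/-- the exponent pairing -/
def ip (a v : Fin k → Fin p) : ℕ := ∑ i, (a i : ℕ) * (v i : ℕ)

lemma ip_zero_right (a : Fin k → Fin p) : ip p k a 0 = 0 := by
  simp [ip]

lemma ip_zero_left (v : Fin k → Fin p) : ip p k 0 v = 0 := by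
  simp [ip]

lemma zeta_ip_add_right (a v b : Fin k → Fin p) :
    zetaP p ^ ip p k a (v + b) = zetaP p ^ ip p k a v * zetaP p ^ ip p k a b := by
  simp only [ip, ← Finset.prod_pow_eq_pow_sum, ← Finset.prod_mul_distrib]
  refine Finset.prod_congr rfl fun i _ => ?_
  have h1 : zetaP p ^ ((a i : ℕ) * (((v + b) i : Fin p) : ℕ)) =
      (zetaP p ^ (((v i + b i : Fin p)) : ℕ)) ^ (a i : ℕ) := by
    rw [mul_comm, pow_mul]; rfl
  rw [h1, zeta_val_add, mul_pow, ← pow_mul, ← pow_mul,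
    mul_comm ((v i : ℕ)), mul_comm ((b i : ℕ))]

lemma zeta_ip_add_left (a a' v : Fin k → Fin p) :
    zetaP p ^ ip p k (a + a') v = zetaP p ^ ip p k a v * zetaP p ^ ip p k a' v := by
  simp only [ip, ← Finset.prod_pow_eq_pow_sum, ← Finset.prod_mul_distrib]
  refine Finset.prod_congr rfl fun i _ => ?_
  have h1 : zetaP p ^ ((((a + a') i : Fin p) : ℕ) * ((v i) : ℕ)) =
      (zetaP p ^ (((a i + a' i : Fin p)) : ℕ)) ^ (v i : ℕ) := by
    rw [pow_mul]; rfl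
  rw [h1, zeta_val_add, mul_pow, ← pow_mul, ← pow_mul]

lemma ip_single_left (hp1 : 1 < p) (i : Fin k) (v : Fin k → Fin p) :
    ip p k (Pi.single i 1) v = (v i : ℕ) := by
  rw [ip]
  rw [Finset.sum_eq_single i]
  · simp [Fin.val_one', Nat.mod_eq_of_lt hp1]
  · intro j _ hj
    simp [Pi.single_eq_of_ne hj]
  · simp

lemma ip_single_right (hp1 : 1 < p) (a : Fin k → Fin p) (j : Fin k) :
    ip p k a (Pi.single j 1) = (a j : ℕ) := by
  rw [ip]
  rw [Finset.sum_eq_single j]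
  · simp [Fin.val_one', Nat.mod_eq_of_lt hp1]
  · intro i _ hi
    simp [Pi.single_eq_of_ne hi]
  · simp

/-- normal-form matrix t · ∏ A^a · ∏ B^b, written explicitly. -/
noncomputable def Mmat (t : ℂ) (a b : Fin k → Fin p) :
    Matrix (Fin k → Fin p) (Fin k → Fin p) ℂ :=
  Matrix.of fun v w => if w = v + b then t * zetaP p ^ ip p k a v else 0

lemma prodA_list (a : Fin k → Fin p) (l : List (Fin k)) :
    (l.map fun i => AmatK p k i ^ (a i : ℕ)).prod =
      Matrix.diagonal fun v => zetaP p ^ ((l.map fun i => (a i : ℕ) * (v i : ℕ)).sum) := by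
  induction l with
  | nil => simp
  | cons i l ih =>
    rw [List.map_cons, List.prod_cons, ih, AmatK, Matrix.diagonal_pow,
      Matrix.diagonal_mul_diagonal]
    refine congrArg Matrix.diagonal (funext fun v => ?_)
    rw [List.map_cons, List.sum_cons, pow_add, Pi.pow_apply, ← pow_mul, mul_comm ((v i : ℕ))]

lemma prodA_eq (a : Fin k → Fin p) :
    prodA p k a = Matrix.diagonal fun v => zetaP p ^ ip p k a v := by
  rw [prodA, prodA_list]
  refine congrArg Matrix.diagonal (funext fun v => ?_)
  rw [ip, Fin.sum_univ_def]

/-- the permutation matrix of translation by c -/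
def permMat (c : Fin k → Fin p) : Matrix (Fin k → Fin p) (Fin k → Fin p) ℂ :=
  Matrix.of fun v w => if w = v + c then 1 else 0

lemma permMat_zero : permMat p k 0 = 1 := by
  ext v w
  simp [permMat, Matrix.one_apply, eq_comm]

lemma permMat_mul (c d : Fin k → Fin p) :
    permMat p k c * permMat p k d = permMat p k (c + d) := by
  ext v w
  simp only [permMat, Matrix.mul_apply, Matrix.of_apply, ite_mul, one_mul, zero_mul]
  rw [Finset.sum_ite_eq' Finset.univ (v + c)]
  simp [add_assoc]

lemma permMat_pow (c : Fin k → Fin p) (n : ℕ) :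
    permMat p k c ^ n = permMat p k (n • c) := by
  induction n with
  | zero => simp [permMat_zero]
  | succ n ih => rw [pow_succ, ih, permMat_mul, succ_nsmul]

lemma BmatK_eq (i : Fin k) : BmatK p k i = permMat p k (Pi.single i 1) := by
  have h : ∀ v : Fin k → Fin p, Function.update v i (v i + 1) = v + Pi.single i 1 := by
    intro v
    funext j
    by_cases hj : j = i
    · subst hj; simp
    · simp [Function.update_of_ne hj, Pi.single_eq_of_ne hj]
  ext v w
  simp [BmatK, permMat, h]

lemma prodB_list (b : Fin k → Fin p) (l : List (Fin k)) :
    (l.map fun i => BmatK p k i ^ (b i : ℕ)).prod =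
      permMat p k ((l.map fun i => (b i : ℕ) • Pi.single i (1 : Fin p)).sum) := by
  induction l with
  | nil => simp [permMat_zero]
  | cons i l ih =>
    rw [List.map_cons, List.prod_cons, ih, BmatK_eq, permMat_pow, permMat_mul,
      List.map_cons, List.sum_cons]

lemma prodB_eq (b : Fin k → Fin p) : prodB p k b = permMat p k b := by
  rw [prodB, prodB_list]
  have h : ((List.finRange k).map fun i => (b i : ℕ) • Pi.single i (1 : Fin p)).sum = b := by
    rw [← Fin.sum_univ_def]
    funext j
    rw [Finset.sum_apply]
    rw [Finset.sum_eq_single j]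
    · simp only [Pi.smul_apply, Pi.single_eq_same, smul_eq_mul, nsmul_eq_mul, mul_one]
      open Fin.CommRing in exact (nsmul_one ((b j : Fin p) : ℕ)).trans (Fin.cast_val_eq_self (b j))
    · intro i _ hi
      simp [Pi.single_eq_of_ne (Ne.symm hi)]
    · simp
  rw [h]

lemma Mmat_smul (s t : ℂ) (a b : Fin k → Fin p) :
    s • Mmat p k t a b = Mmat p k (s * t) a b := by
  ext v w
  simp [Mmat, Matrix.smul_apply, mul_ite, mul_assoc]

lemma key_form (t : ℂ) (a b : Fin k → Fin p) :
    t • (prodA p k a * prodB p k b) = Mmat p k t a b := by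
  rw [prodA_eq, prodB_eq]
  have h : Matrix.diagonal (fun v => zetaP p ^ ip p k a v) * permMat p k b =
      Mmat p k 1 a b := by
    ext v w
    rw [Matrix.diagonal_mul]
    simp [Mmat, permMat, mul_comm]
  rw [h, Mmat_smul, mul_one]

lemma Mmat_mul (t t' : ℂ) (a a' b b' : Fin k → Fin p) :
    Mmat p k t a b * Mmat p k t' a' b' =
      Mmat p k (t * t' * zetaP p ^ ip p k a' b) (a + a') (b + b') := by
  ext v w
  simp only [Mmat, Matrix.mul_apply, Matrix.of_apply, ite_mul, zero_mul]
  rw [Finset.sum_ite_eq' Finset.univ (v + b)]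
  simp only [Finset.mem_univ, if_true]
  by_cases h : w = v + (b + b')
  · rw [if_pos h, if_pos (show w = v + b + b' by rw [h, add_assoc])]
    rw [zeta_ip_add_right, zeta_ip_add_left]
    ring
  · rw [if_neg h, if_neg (show ¬w = v + b + b' from fun hc => h (by rw [hc, add_assoc])),
      mul_zero]

lemma Mmat_perm (c : Fin k → Fin p) : Mmat p k 1 0 c = permMat p k c := by
  ext v w
  simp [Mmat, permMat, ip_zero_left]

lemma Mmat_one : Mmat p k 1 0 0 = 1 := by
  rw [Mmat_perm, permMat_zero]

end Aux

theorem stmt2 (p k : ℕ) (hp : p.Prime) [NeZero p] (hk : 1 ≤ k) :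
    (∀ x ∈ GammaK p k, ∃ (t : ℂ) (a b : Fin k → Fin p), ‖t‖ = 1 ∧
      (x : Matrix (Fin k → Fin p) (Fin k → Fin p) ℂ) = t • (prodA p k a * prodB p k b)) ∧
    (∀ (t t' : ℂ) (a a' b b' : Fin k → Fin p), ‖t‖ = 1 → ‖t'‖ = 1 →
      t • (prodA p k a * prodB p k b) = t' • (prodA p k a' * prodB p k b') →
      t = t' ∧ a = a' ∧ b = b') := by
  have hp1 : 1 < p := hp.one_lt
  have hnorm : ∀ (t : ℂ) (e : ℕ), ‖t‖ = 1 → ‖t * zetaP p ^ e‖ = 1 := by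
    intro t e ht
    rw [norm_mul, norm_pow, zeta_norm, one_pow, ht, mul_one]
  constructor
  · -- existence
    intro x hx
    have main : ∃ (t : ℂ) (a b : Fin k → Fin p), ‖t‖ = 1 ∧
        (x : Matrix (Fin k → Fin p) (Fin k → Fin p) ℂ) = Mmat p k t a b := by
      refine Subgroup.closure_induction ?_ ?_ ?_ ?_ hx
      · rintro y (⟨t, ht, hy⟩ | ⟨i, hy⟩ | ⟨i, hy⟩)
        · exact ⟨t, 0, 0, ht, by rw [hy, ← Mmat_one, Mmat_smul, mul_one]⟩
        · refine ⟨1, Pi.single i 1, 0, by simp, ?_⟩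
          rw [hy]
          ext v w
          rw [AmatK, Matrix.diagonal_apply]
          simp [Mmat, ip_single_left p k hp1, eq_comm]
        · refine ⟨1, 0, Pi.single i 1, by simp, ?_⟩
          rw [hy, Mmat_perm, ← BmatK_eq]
      · exact ⟨1, 0, 0, by simp, by rw [Mmat_one]; rfl⟩
      · rintro y z _ _ ⟨t, a, b, ht, hy⟩ ⟨t', a', b', ht', hz⟩
        refine ⟨t * t' * zetaP p ^ ip p k a' b, a + a', b + b', ?_, ?_⟩
        · rw [hnorm _ _ (by rw [norm_mul, ht, ht', mul_one])]
        · have : ((y * z : Matrix.unitaryGroup (Fin k → Fin p) ℂ) :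
              Matrix (Fin k → Fin p) (Fin k → Fin p) ℂ) =
              (y : Matrix (Fin k → Fin p) (Fin k → Fin p) ℂ) * z := rfl
          rw [this, hy, hz, Mmat_mul]
      · rintro y _ ⟨t, a, b, ht, hy⟩
        have ht0 : t * zetaP p ^ ip p k (-a) b ≠ 0 := by
          intro h
          have := hnorm t (ip p k (-a) b) ht
          rw [h] at this
          simp at this
        refine ⟨(t * zetaP p ^ ip p k (-a) b)⁻¹, -a, -b, ?_, ?_⟩
        · rw [norm_inv, hnorm _ _ ht, inv_one]
        · have h1 : (y : Matrix (Fin k → Fin p) (Fin k → Fin p) ℂ) *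
              Mmat p k (t * zetaP p ^ ip p k (-a) b)⁻¹ (-a) (-b) = 1 := by
            rw [hy, Mmat_mul]
            have : t * (t * zetaP p ^ ip p k (-a) b)⁻¹ * zetaP p ^ ip p k (-a) b = 1 := by
              field_simp
              exact div_self ht0
            rw [this]
            simp only [add_neg_cancel]
            exact Mmat_one p k
          have h2 : ((y⁻¹ : Matrix.unitaryGroup (Fin k → Fin p) ℂ) :
              Matrix (Fin k → Fin p) (Fin k → Fin p) ℂ) * y = 1 := by
            have : ((y⁻¹ * y : Matrix.unitaryGroup (Fin k → Fin p) ℂ) :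
                Matrix (Fin k → Fin p) (Fin k → Fin p) ℂ) = 1 := by
              rw [inv_mul_cancel]; rfl
            rw [← this]; rfl
          calc ((y⁻¹ : Matrix.unitaryGroup (Fin k → Fin p) ℂ) :
              Matrix (Fin k → Fin p) (Fin k → Fin p) ℂ)
              = (y⁻¹ : Matrix.unitaryGroup (Fin k → Fin p) ℂ) *
                ((y : Matrix (Fin k → Fin p) (Fin k → Fin p) ℂ) *
                  Mmat p k (t * zetaP p ^ ip p k (-a) b)⁻¹ (-a) (-b)) := by
                rw [h1, mul_one]
            _ = (((y⁻¹ : Matrix.unitaryGroup (Fin k → Fin p) ℂ) :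
                  Matrix (Fin k → Fin p) (Fin k → Fin p) ℂ) * y) *
                  Mmat p k (t * zetaP p ^ ip p k (-a) b)⁻¹ (-a) (-b) := by
                rw [mul_assoc]
            _ = Mmat p k (t * zetaP p ^ ip p k (-a) b)⁻¹ (-a) (-b) := by
                rw [h2, one_mul]
    obtain ⟨t, a, b, ht, hx'⟩ := main
    exact ⟨t, a, b, ht, by rw [hx', key_form]⟩
  · -- uniqueness
    intro t t' a a' b b' ht ht' h
    rw [key_form, key_form] at h
    have ht0 : t ≠ 0 := by intro h0; rw [h0] at ht; simp at ht
    have H : ∀ v w, Mmat p k t a b v w = Mmat p k t' a' b' v w := fun v w => by rw [h]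
    have hb : b = b' := by
      by_contra hne
      have := H 0 b
      simp [Mmat, ip_zero_right, Ne.symm hne, hne] at this
      exact ht0 this
    subst hb
    have htt : t = t' := by
      have := H 0 b
      simpa [Mmat, ip_zero_right] using this
    subst htt
    refine ⟨rfl, ?_, rfl⟩
    funext j
    have := H (Pi.single j 1) (Pi.single j 1 + b)
    simp only [Mmat, Matrix.of_apply, if_pos rfl] at this
    have hz := mul_left_cancel₀ ht0 this
    rw [ip_single_right p k hp1, ip_single_right p k hp1] at hz
    have := (Complex.isPrimitiveRoot_exp p (NeZero.ne p)).pow_inj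
      (a j).isLt (a' j).isLt hz
    exact Fin.ext this
end

section
/- Fix a prime p, an integer k ≥ 1, and an integer m with p ∤ m. Let Γ(k) be the subgroup of U(p^k) generated by all scalar matrices t·I with |t| = 1 together with A_0,…,A_{k−1}, B_0,…,B_{k−1}. Then there exists a surjective group homomorphism α : Γ(k) → Γ(k) such that α(t·I) = t^m·I for every t ∈ ℂ with |t| = 1, α(A_i) = A_i^m for every 0 ≤ i < k, and α(B_i) = B_i for every 0 ≤ i < k. -/
set_option synthInstance.maxHeartbeats 1000000
set_option maxHeartbeats 1000000

open Matrix

namespace Stmt4Aux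

variable {p k : ℕ}

/-- entrywise `m`-th power map -/
noncomputable def phi (m : ℤ) (g : Matrix (Fin k → Fin p) (Fin k → Fin p) ℂ) :
    Matrix (Fin k → Fin p) (Fin k → Fin p) ℂ :=
  Matrix.of fun v w => g v w ^ m

/-- row-monomial predicate -/
def RM (g : Matrix (Fin k → Fin p) (Fin k → Fin p) ℂ) : Prop :=
  ∀ v w w', g v w ≠ 0 → g v w' ≠ 0 → w = w'

theorem phi_apply (m : ℤ) (g : Matrix (Fin k → Fin p) (Fin k → Fin p) ℂ) (v w) :
    phi m g v w = g v w ^ m := rfl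

theorem phi_one {m : ℤ} (hm : m ≠ 0) : phi (p := p) (k := k) m 1 = 1 := by
  ext v w
  by_cases h : v = w <;> simp [phi, Matrix.one_apply, h, _root_.zero_zpow m hm]

theorem phi_mul {m : ℤ} (hm : m ≠ 0) (g h : Matrix (Fin k → Fin p) (Fin k → Fin p) ℂ)
    (hg : RM g) : phi m (g * h) = phi m g * phi m h := by
  ext v w
  simp only [phi, Matrix.of_apply, Matrix.mul_apply]
  by_cases hex : ∃ u, g v u ≠ 0
  · obtain ⟨u0, hu0⟩ := hex
    have h1 : ∀ b ∈ Finset.univ, b ≠ u0 → g v b * h b w = 0 := by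
      intro b _ hb
      have : g v b = 0 := by
        by_contra hc; exact hb (hg v b u0 hc hu0)
      simp [this]
    have h2 : ∀ b ∈ Finset.univ, b ≠ u0 → g v b ^ m * h b w ^ m = 0 := by
      intro b _ hb
      have : g v b = 0 := by
        by_contra hc; exact hb (hg v b u0 hc hu0)
      simp [this, _root_.zero_zpow m hm]
    rw [Finset.sum_eq_single_of_mem u0 (Finset.mem_univ _) h1,
        Finset.sum_eq_single_of_mem u0 (Finset.mem_univ _) h2, mul_zpow]
  · push_neg at hex
    simp [hex, _root_.zero_zpow m hm]

theorem phi_star (m : ℤ) (g : Matrix (Fin k → Fin p) (Fin k → Fin p) ℂ) :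
    phi m (star g) = star (phi m g) := by
  ext v w
  simp only [phi, Matrix.of_apply, Matrix.star_apply]
  exact (map_zpow₀ (starRingEnd ℂ) (g w v) m).symm

theorem rm_mul {g h : Matrix (Fin k → Fin p) (Fin k → Fin p) ℂ} (hg : RM g) (hh : RM h) :
    RM (g * h) := by
  intro v w w' hw hw'
  rw [Matrix.mul_apply] at hw hw'
  obtain ⟨u1, _, h1⟩ := Finset.exists_ne_zero_of_sum_ne_zero hw
  obtain ⟨u2, _, h2⟩ := Finset.exists_ne_zero_of_sum_ne_zero hw'
  have hg1 : g v u1 ≠ 0 := left_ne_zero_of_mul h1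
  have hg2 : g v u2 ≠ 0 := left_ne_zero_of_mul h2
  have := hg v u1 u2 hg1 hg2
  subst this
  exact hh u1 w w' (right_ne_zero_of_mul h1) (right_ne_zero_of_mul h2)

theorem rm_star (g : Matrix.unitaryGroup (Fin k → Fin p) ℂ)
    (hg : RM (g : Matrix (Fin k → Fin p) (Fin k → Fin p) ℂ)) :
    RM (star (g : Matrix (Fin k → Fin p) (Fin k → Fin p) ℂ)) := by
  set M : Matrix (Fin k → Fin p) (Fin k → Fin p) ℂ :=
    (g : Matrix (Fin k → Fin p) (Fin k → Fin p) ℂ) with hM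
  intro v w w' hw hw'
  rw [Matrix.star_apply, star_ne_zero] at hw hw'
  by_contra hne
  have h1 : (M * star M) w w' = 0 := by
    rw [Matrix.mem_unitaryGroup_iff.mp g.2]
    exact Matrix.one_apply_ne hne
  have h2 : (M * star M) w w' = M w v * star M v w' := by
    rw [Matrix.mul_apply]
    refine Finset.sum_eq_single_of_mem v (Finset.mem_univ _) ?_
    intro b _ hb
    have : M w b = 0 := by
      by_contra hc; exact hb (hg w b v hc hw)
    simp [this]
  rw [h2] at h1
  rcases mul_eq_zero.mp h1 with h | h
  · exact hw h
  · rw [Matrix.star_apply, star_eq_zero] at h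
    exact hw' h

theorem coe_zpow (x : Matrix.unitaryGroup (Fin k → Fin p) ℂ) (j : ℤ) :
    ((x ^ j : Matrix.unitaryGroup (Fin k → Fin p) ℂ) :
        Matrix (Fin k → Fin p) (Fin k → Fin p) ℂ) =
      (x : Matrix (Fin k → Fin p) (Fin k → Fin p) ℂ) ^ j := by
  cases j with
  | ofNat n =>
    rw [Int.ofNat_eq_coe, zpow_natCast, zpow_natCast]
    exact SubmonoidClass.coe_pow x n
  | negSucc n =>
    rw [zpow_negSucc, zpow_negSucc]
    have hcoe : ((x ^ (n + 1) : Matrix.unitaryGroup (Fin k → Fin p) ℂ) :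
        Matrix (Fin k → Fin p) (Fin k → Fin p) ℂ) =
        (x : Matrix (Fin k → Fin p) (Fin k → Fin p) ℂ) ^ (n + 1) :=
      SubmonoidClass.coe_pow x (n + 1)
    have hinv : (((x ^ (n + 1))⁻¹ : Matrix.unitaryGroup (Fin k → Fin p) ℂ) :
        Matrix (Fin k → Fin p) (Fin k → Fin p) ℂ) =
        star ((x ^ (n + 1) : Matrix.unitaryGroup (Fin k → Fin p) ℂ) :
          Matrix (Fin k → Fin p) (Fin k → Fin p) ℂ) := rfl
    rw [hinv, hcoe]
    refine (Matrix.inv_eq_left_inv ?_).symm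
    rw [← hcoe]
    exact Matrix.mem_unitaryGroup_iff'.mp (x ^ (n + 1)).2

theorem diagonal_zpow (d : (Fin k → Fin p) → ℂ) (hd : ∀ i, d i ≠ 0) (j : ℤ) :
    (Matrix.diagonal d) ^ j = Matrix.diagonal (fun i => d i ^ j) := by
  cases j with
  | ofNat n =>
    rw [Int.ofNat_eq_coe, zpow_natCast, Matrix.diagonal_pow]
    congr 1
  | negSucc n =>
    rw [zpow_negSucc, Matrix.diagonal_pow]
    refine Matrix.inv_eq_left_inv ?_
    rw [Matrix.diagonal_mul_diagonal]
    have he : (fun i => d i ^ (Int.negSucc n) * (d ^ (n + 1)) i) = fun _ => (1 : ℂ) := by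
      funext i
      have h0 : Int.negSucc n + ((n + 1 : ℕ) : ℤ) = 0 := by simp [Int.negSucc_eq]
      rw [Pi.pow_apply, ← zpow_natCast (d i) (n + 1), ← zpow_add₀ (hd i), h0, zpow_zero]
    rw [he, Matrix.diagonal_one]

theorem zetaP_ne (p : ℕ) : zetaP p ≠ 0 := Complex.exp_ne_zero _

theorem zetaP_pow (p : ℕ) [NeZero p] : zetaP p ^ (p : ℕ) = 1 := by
  have hp0 : (p : ℂ) ≠ 0 := Nat.cast_ne_zero.mpr (NeZero.ne p)
  rw [zetaP, ← Complex.exp_nat_mul, mul_comm, div_mul_cancel₀ _ hp0,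
    Complex.exp_two_pi_mul_I]

theorem mul_star_self_of_norm_one {s : ℂ} (hs : ‖s‖ = 1) : s * star s = 1 := by
  rw [Complex.star_def, Complex.mul_conj]
  norm_cast
  rw [Complex.normSq_eq_norm_sq, hs, one_pow]

theorem scalar_mem_unitary (s : ℂ) (hs : ‖s‖ = 1) :
    s • (1 : Matrix (Fin k → Fin p) (Fin k → Fin p) ℂ) ∈
      Matrix.unitaryGroup (Fin k → Fin p) ℂ := by
  rw [Matrix.mem_unitaryGroup_iff, star_smul, star_one, Matrix.smul_mul, Matrix.mul_smul,
    Matrix.one_mul, smul_smul, mul_star_self_of_norm_one hs, one_smul]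

theorem phi_smul_one {m : ℤ} (hm : m ≠ 0) (t : ℂ) :
    phi (p := p) (k := k) m (t • 1) = (t ^ m) • 1 := by
  ext v w
  by_cases h : v = w <;>
    simp [phi, Matrix.smul_apply, Matrix.one_apply, h, _root_.zero_zpow m hm]

theorem phi_diagonal {m : ℤ} (hm : m ≠ 0) (d : (Fin k → Fin p) → ℂ) :
    phi m (Matrix.diagonal d) = Matrix.diagonal (fun v => d v ^ m) := by
  ext v w
  by_cases h : v = w <;>
    simp [phi, Matrix.diagonal_apply, h, _root_.zero_zpow m hm]

theorem phi_A {m : ℤ} [NeZero p] (hm : m ≠ 0) (i : Fin k) :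
    phi m (AmatK p k i) = AmatK p k i ^ m := by
  rw [AmatK, phi_diagonal hm, diagonal_zpow _ (fun v => pow_ne_zero _ (zetaP_ne p))]

theorem phi_B {m : ℤ} [NeZero p] (hm : m ≠ 0) (i : Fin k) :
    phi m (BmatK p k i) = BmatK p k i := by
  ext v w
  rw [BmatK, phi_apply, Matrix.of_apply]
  by_cases h : w = Function.update v i (v i + 1) <;>
    simp [h, _root_.zero_zpow m hm]

theorem zpow_one_add_mul {y : ℂ} {P : ℕ} (hP : P ≠ 0) (hy : y ^ P = 1) (c : ℤ) :
    y ^ (1 + (P : ℤ) * c) = y := by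
  have hy0 : y ≠ 0 := by
    intro h0
    rw [h0, zero_pow hP] at hy
    exact one_ne_zero hy.symm
  rw [zpow_add₀ hy0, zpow_one, _root_.zpow_mul, zpow_natCast, hy, _root_.one_zpow, mul_one]


/-- The comparison subgroup. -/
noncomputable def Ksub (p k : ℕ) [NeZero p] (m : ℤ) (hm : m ≠ 0) :
    Subgroup (Matrix.unitaryGroup (Fin k → Fin p) ℂ) where
  carrier := {g | RM (g : Matrix (Fin k → Fin p) (Fin k → Fin p) ℂ) ∧
    ∃ h : GammaK p k,
      ((h : Matrix.unitaryGroup (Fin k → Fin p) ℂ) :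
          Matrix (Fin k → Fin p) (Fin k → Fin p) ℂ)
        = phi m (g : Matrix (Fin k → Fin p) (Fin k → Fin p) ℂ)}
  one_mem' := by
    constructor
    · intro v w w' h1 h2
      have e1 : w = v := by
        by_contra hc
        exact h1 (Matrix.one_apply_ne' hc)
      have e2 : w' = v := by
        by_contra hc
        exact h2 (Matrix.one_apply_ne' hc)
      rw [e1, e2]
    · exact ⟨1, by simpa using (phi_one (p := p) (k := k) hm).symm⟩
  mul_mem' := by
    rintro a b ⟨ha1, ha2⟩ ⟨hb1, hb2⟩
    refine ⟨rm_mul ha1 hb1, ?_⟩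
    obtain ⟨ga, hga⟩ := ha2
    obtain ⟨gb, hgb⟩ := hb2
    refine ⟨ga * gb, ?_⟩
    show ((ga : Matrix.unitaryGroup (Fin k → Fin p) ℂ) :
        Matrix (Fin k → Fin p) (Fin k → Fin p) ℂ) *
      ((gb : Matrix.unitaryGroup (Fin k → Fin p) ℂ) :
        Matrix (Fin k → Fin p) (Fin k → Fin p) ℂ) =
      phi m ((a : Matrix (Fin k → Fin p) (Fin k → Fin p) ℂ) *
        (b : Matrix (Fin k → Fin p) (Fin k → Fin p) ℂ))
    rw [phi_mul hm _ _ ha1, hga, hgb]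
  inv_mem' := by
    rintro a ⟨ha1, ha2⟩
    refine ⟨rm_star a ha1, ?_⟩
    obtain ⟨ga, hga⟩ := ha2
    refine ⟨ga⁻¹, ?_⟩
    show star ((ga : Matrix.unitaryGroup (Fin k → Fin p) ℂ) :
        Matrix (Fin k → Fin p) (Fin k → Fin p) ℂ) =
      phi m (star (a : Matrix (Fin k → Fin p) (Fin k → Fin p) ℂ))
    rw [hga, ← phi_star]

set_option synthInstance.maxHeartbeats 1000000 in
theorem gamma_le_Ksub (p k : ℕ) [NeZero p] (m : ℤ) (hm : m ≠ 0) :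
    GammaK p k ≤ Ksub p k m hm := by
  rw [GammaK]
  refine (Subgroup.closure_le _).mpr ?_
  rintro x (⟨t, ht, hx⟩ | ⟨i, hx⟩ | ⟨i, hx⟩)
  · constructor
    · intro v w w' h1 h2
      rw [hx, Matrix.smul_apply] at h1 h2
      have e1 : w = v := by
        by_contra hc
        rw [Matrix.one_apply_ne' hc, smul_zero] at h1
        exact h1 rfl
      have e2 : w' = v := by
        by_contra hc
        rw [Matrix.one_apply_ne' hc, smul_zero] at h2
        exact h2 rfl
      rw [e1, e2]
    · have hnorm : ‖t ^ m‖ = 1 := by rw [norm_zpow, ht, _root_.one_zpow]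
      refine ⟨⟨⟨(t ^ m) • 1, scalar_mem_unitary _ hnorm⟩,
        Subgroup.subset_closure (Or.inl ⟨t ^ m, hnorm, rfl⟩)⟩, ?_⟩
      show (t ^ m) • 1 = phi m (x : Matrix (Fin k → Fin p) (Fin k → Fin p) ℂ)
      rw [hx, phi_smul_one hm]
  · constructor
    · intro v w w' h1 h2
      rw [hx] at h1 h2
      have e1 : v = w := by
        by_contra hc
        exact h1 (Matrix.diagonal_apply_ne _ hc)
      have e2 : v = w' := by
        by_contra hc
        exact h2 (Matrix.diagonal_apply_ne _ hc)
      rw [← e1, ← e2]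
    · refine ⟨(⟨x, Subgroup.subset_closure (Or.inr (Or.inl ⟨i, hx⟩))⟩ : GammaK p k) ^ m, ?_⟩
      show ((((⟨x, _⟩ : GammaK p k) ^ m : GammaK p k) :
          Matrix.unitaryGroup (Fin k → Fin p) ℂ) :
          Matrix (Fin k → Fin p) (Fin k → Fin p) ℂ) =
        phi m (x : Matrix (Fin k → Fin p) (Fin k → Fin p) ℂ)
      rw [SubgroupClass.coe_zpow, coe_zpow, hx, phi_A hm]
  · constructor
    · intro v w w' h1 h2
      rw [hx] at h1 h2
      have e1 : w = Function.update v i (v i + 1) := by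
        by_contra hc
        exact h1 (by rw [BmatK, Matrix.of_apply, if_neg hc])
      have e2 : w' = Function.update v i (v i + 1) := by
        by_contra hc
        exact h2 (by rw [BmatK, Matrix.of_apply, if_neg hc])
      rw [e1, e2]
    · refine ⟨⟨x, Subgroup.subset_closure (Or.inr (Or.inr ⟨i, hx⟩))⟩, ?_⟩
      show (x : Matrix (Fin k → Fin p) (Fin k → Fin p) ℂ) =
        phi m (x : Matrix (Fin k → Fin p) (Fin k → Fin p) ℂ)
      rw [hx, phi_B hm]


theorem exists_inv_mod (p : ℕ) [NeZero p] [Fact p.Prime] {m : ℤ} (hm : ¬ (p : ℤ) ∣ m) :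
    ∃ j c : ℤ, j * m = 1 + (p : ℤ) * c := by
  have hmz : ((m : ℤ) : ZMod p) ≠ 0 := by
    rwa [Ne, ZMod.intCast_zmod_eq_zero_iff_dvd]
  refine ⟨((((m : ℤ) : ZMod p))⁻¹.val : ℤ), ?_⟩
  have h1 : ((((((m : ℤ) : ZMod p))⁻¹.val : ℤ) * m : ℤ) : ZMod p) = 1 := by
    push_cast
    rw [ZMod.natCast_val, ZMod.cast_id]
    exact inv_mul_cancel₀ hmz
  have h2 : (p : ℤ) ∣ ((((m : ℤ) : ZMod p))⁻¹.val : ℤ) * m - 1 := by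
    rw [← ZMod.intCast_zmod_eq_zero_iff_dvd, Int.cast_sub, Int.cast_one, h1, sub_self]
  obtain ⟨c, hc⟩ := h2
  exact ⟨c, by linarith⟩

end Stmt4Aux

open Stmt4Aux in
/-- There is a surjective endomorphism α of Γ(k) with α(t·I) = t^m·I, α(A_i) = A_i^m and
α(B_i) = B_i, whenever p ∤ m. -/
theorem stmt4 (p k : ℕ) (hp : p.Prime) [NeZero p] (hk : 1 ≤ k)
    (m : ℤ) (hm : ¬ (p : ℤ) ∣ m) :
    ∃ α : GammaK p k →* GammaK p k, Function.Surjective α ∧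
      (∀ (g : GammaK p k) (t : ℂ), ‖t‖ = 1 →
        ((g : Matrix.unitaryGroup (Fin k → Fin p) ℂ) :
            Matrix (Fin k → Fin p) (Fin k → Fin p) ℂ) = t • 1 →
        ((α g : Matrix.unitaryGroup (Fin k → Fin p) ℂ) :
            Matrix (Fin k → Fin p) (Fin k → Fin p) ℂ) = t ^ m • 1) ∧
      (∀ (g : GammaK p k) (i : Fin k),
        ((g : Matrix.unitaryGroup (Fin k → Fin p) ℂ) :
            Matrix (Fin k → Fin p) (Fin k → Fin p) ℂ) = AmatK p k i →
        ((α g : Matrix.unitaryGroup (Fin k → Fin p) ℂ) :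
            Matrix (Fin k → Fin p) (Fin k → Fin p) ℂ) = AmatK p k i ^ m) ∧
      (∀ (g : GammaK p k) (i : Fin k),
        ((g : Matrix.unitaryGroup (Fin k → Fin p) ℂ) :
            Matrix (Fin k → Fin p) (Fin k → Fin p) ℂ) = BmatK p k i →
        ((α g : Matrix.unitaryGroup (Fin k → Fin p) ℂ) :
            Matrix (Fin k → Fin p) (Fin k → Fin p) ℂ) = BmatK p k i) := by
  classical
  haveI := Fact.mk hp
  have hm0 : m ≠ 0 := by rintro rfl; exact hm (dvd_zero _)
  have hle : GammaK p k ≤ Ksub p k m hm0 := gamma_le_Ksub p k m hm0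
  let f : GammaK p k → GammaK p k := fun g => ((hle g.2).2).choose
  have hf : ∀ g : GammaK p k,
      (((f g : GammaK p k) : Matrix.unitaryGroup (Fin k → Fin p) ℂ) :
          Matrix (Fin k → Fin p) (Fin k → Fin p) ℂ) =
        phi m ((g : Matrix.unitaryGroup (Fin k → Fin p) ℂ) :
          Matrix (Fin k → Fin p) (Fin k → Fin p) ℂ) :=
    fun g => ((hle g.2).2).choose_spec
  have hrm : ∀ g : GammaK p k,
      RM ((g : Matrix.unitaryGroup (Fin k → Fin p) ℂ) :
        Matrix (Fin k → Fin p) (Fin k → Fin p) ℂ) :=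
    fun g => (hle g.2).1
  have hext : ∀ {g h : GammaK p k},
      (((g : GammaK p k) : Matrix.unitaryGroup (Fin k → Fin p) ℂ) :
          Matrix (Fin k → Fin p) (Fin k → Fin p) ℂ) =
        (((h : GammaK p k) : Matrix.unitaryGroup (Fin k → Fin p) ℂ) :
          Matrix (Fin k → Fin p) (Fin k → Fin p) ℂ) → g = h :=
    fun h => Subtype.ext (Subtype.ext h)
  let α : GammaK p k →* GammaK p k := MonoidHom.mk' f (by
    intro g h
    apply hext
    have hcoe : (((g * h : GammaK p k) : Matrix.unitaryGroup (Fin k → Fin p) ℂ) :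
        Matrix (Fin k → Fin p) (Fin k → Fin p) ℂ) =
        (((g : GammaK p k) : Matrix.unitaryGroup (Fin k → Fin p) ℂ) :
          Matrix (Fin k → Fin p) (Fin k → Fin p) ℂ) *
        (((h : GammaK p k) : Matrix.unitaryGroup (Fin k → Fin p) ℂ) :
          Matrix (Fin k → Fin p) (Fin k → Fin p) ℂ) := rfl
    have hcoe2 : (((f g * f h : GammaK p k) : Matrix.unitaryGroup (Fin k → Fin p) ℂ) :
        Matrix (Fin k → Fin p) (Fin k → Fin p) ℂ) =
        (((f g : GammaK p k) : Matrix.unitaryGroup (Fin k → Fin p) ℂ) :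
          Matrix (Fin k → Fin p) (Fin k → Fin p) ℂ) *
        (((f h : GammaK p k) : Matrix.unitaryGroup (Fin k → Fin p) ℂ) :
          Matrix (Fin k → Fin p) (Fin k → Fin p) ℂ) := rfl
    rw [hf (g * h), hcoe, hcoe2, hf g, hf h, phi_mul hm0 _ _ (hrm g)])
  have hα : ∀ g : GammaK p k,
      ((α g : Matrix.unitaryGroup (Fin k → Fin p) ℂ) :
          Matrix (Fin k → Fin p) (Fin k → Fin p) ℂ) =
        phi m ((g : Matrix.unitaryGroup (Fin k → Fin p) ℂ) :
          Matrix (Fin k → Fin p) (Fin k → Fin p) ℂ) := hf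
  refine ⟨α, ?_, ?_, ?_, ?_⟩
  · -- surjectivity
    have hT : GammaK p k ≤ Subgroup.map (GammaK p k).subtype α.range := by
      conv_lhs => rw [GammaK]
      refine (Subgroup.closure_le _).mpr ?_
      rintro x (⟨t, ht, hx⟩ | ⟨i, hx⟩ | ⟨i, hx⟩)
      · -- scalar generator
        have ht0 : t ≠ 0 := by
          intro h0; rw [h0, norm_zero] at ht; norm_num at ht
        have hmC : (m : ℂ) ≠ 0 := Int.cast_ne_zero.mpr hm0
        set s : ℂ := Complex.exp (((t.arg / (m : ℝ) : ℝ) : ℂ) * Complex.I) with hs_def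
        have hsnorm : ‖s‖ = 1 := by
          rw [hs_def]
          exact Complex.norm_exp_ofReal_mul_I _
        have hspow : s ^ m = t := by
          rw [hs_def, ← Complex.exp_int_mul]
          have harg : (m : ℂ) * (((t.arg / (m : ℝ) : ℝ) : ℂ) * Complex.I) =
              (t.arg : ℂ) * Complex.I := by
            push_cast
            field_simp
          rw [harg]
          have habs : ((‖t‖ : ℝ) : ℂ) = 1 := by
            rw [ht, Complex.ofReal_one]
          calc Complex.exp (t.arg * Complex.I)
              = ((‖t‖ : ℝ) : ℂ) * Complex.exp (t.arg * Complex.I) := by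
                rw [habs, one_mul]
            _ = t := Complex.norm_mul_exp_arg_mul_I t
        set g : GammaK p k := ⟨⟨s • 1, scalar_mem_unitary s hsnorm⟩,
          Subgroup.subset_closure (Or.inl ⟨s, hsnorm, rfl⟩)⟩ with hg_def
        refine Subgroup.mem_map.mpr ⟨α g, MonoidHom.mem_range.mpr ⟨g, rfl⟩, ?_⟩
        refine Subtype.ext ?_
        show ((α g : Matrix.unitaryGroup (Fin k → Fin p) ℂ) :
            Matrix (Fin k → Fin p) (Fin k → Fin p) ℂ) =
          (x : Matrix (Fin k → Fin p) (Fin k → Fin p) ℂ)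
        rw [hα g, hx]
        show phi m (s • 1) = t • 1
        rw [phi_smul_one hm0, hspow]
      · -- A generator
        set a : GammaK p k := ⟨x, Subgroup.subset_closure (Or.inr (Or.inl ⟨i, hx⟩))⟩
          with ha_def
        obtain ⟨j, c, hjm⟩ := exists_inv_mod p hm
        refine Subgroup.mem_map.mpr ⟨α (a ^ j), MonoidHom.mem_range.mpr ⟨a ^ j, rfl⟩, ?_⟩
        refine Subtype.ext ?_
        show ((α (a ^ j) : Matrix.unitaryGroup (Fin k → Fin p) ℂ) :
            Matrix (Fin k → Fin p) (Fin k → Fin p) ℂ) =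
          (x : Matrix (Fin k → Fin p) (Fin k → Fin p) ℂ)
        rw [hα (a ^ j)]
        have hcz : (((a ^ j : GammaK p k) : Matrix.unitaryGroup (Fin k → Fin p) ℂ) :
            Matrix (Fin k → Fin p) (Fin k → Fin p) ℂ) =
            ((x : Matrix (Fin k → Fin p) (Fin k → Fin p) ℂ)) ^ j := by
          rw [SubgroupClass.coe_zpow]
          exact coe_zpow x j
        rw [hcz, hx, AmatK,
          diagonal_zpow _ (fun v => pow_ne_zero _ (zetaP_ne p)) j,
          phi_diagonal hm0]
        have hfun : (fun v : Fin k → Fin p => ((zetaP p ^ (v i : ℕ)) ^ j) ^ m) =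
            (fun v : Fin k → Fin p => (zetaP p ^ (v i : ℕ) : ℂ)) := by
          funext v
          have hyP : (zetaP p ^ ((v i : ℕ) : ℤ)) ^ (p : ℕ) = 1 := by
            rw [_root_.zpow_natCast, ← pow_mul, mul_comm ((v i : ℕ)) p, pow_mul,
              zetaP_pow, one_pow]
          calc ((zetaP p ^ (v i : ℕ)) ^ j) ^ m
              = ((zetaP p ^ ((v i : ℕ) : ℤ)) ^ j) ^ m := by
                rw [_root_.zpow_natCast]
            _ = (zetaP p ^ ((v i : ℕ) : ℤ)) ^ (j * m) := (_root_.zpow_mul _ j m).symm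
            _ = (zetaP p ^ ((v i : ℕ) : ℤ)) ^ (1 + (p : ℤ) * c) := by rw [hjm]
            _ = zetaP p ^ ((v i : ℕ) : ℤ) := zpow_one_add_mul (NeZero.ne p) hyP c
            _ = zetaP p ^ (v i : ℕ) := _root_.zpow_natCast _ _
        rw [hfun]
      · -- B generator
        set g : GammaK p k := ⟨x, Subgroup.subset_closure (Or.inr (Or.inr ⟨i, hx⟩))⟩
          with hg_def
        refine Subgroup.mem_map.mpr ⟨α g, MonoidHom.mem_range.mpr ⟨g, rfl⟩, ?_⟩
        refine Subtype.ext ?_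
        show ((α g : Matrix.unitaryGroup (Fin k → Fin p) ℂ) :
            Matrix (Fin k → Fin p) (Fin k → Fin p) ℂ) =
          (x : Matrix (Fin k → Fin p) (Fin k → Fin p) ℂ)
        rw [hα g, hx]
        show phi m (BmatK p k i) = BmatK p k i
        exact phi_B hm0 i
    intro h
    obtain ⟨y, hy, hyx⟩ := Subgroup.mem_map.mp (hT h.2)
    obtain ⟨g, hg⟩ := MonoidHom.mem_range.mp hy
    exact ⟨g, by rw [hg]; exact Subtype.ext hyx⟩
  · intro g t ht hg
    rw [hα g, hg, phi_smul_one hm0]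
  · intro g i hg
    rw [hα g, hg, phi_A hm0]
  · intro g i hg
    rw [hα g, hg, phi_B hm0]
end

section
/- Let p be a prime and let X be a finite set with n elements. If P is a p-radical subgroup of the symmetric group Σ_X, then |P| ≥ n − |X^P|, where X^P = {x ∈ X : g·x = x for all g ∈ P} is the set of points fixed by every element of P. -/
open Equiv MulAction

set_option linter.unusedSectionVars false
set_option maxHeartbeats 1000000

section Aux

variable {X : Type*} [Fintype X] [DecidableEq X]

/-- The canonical subgroup: elements centralizing `P` and preserving every `P`-orbit. -/
private def myD (P : Subgroup (Perm X)) : Subgroup (Perm X) where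
  carrier := {σ | (∀ g ∈ P, Commute g σ) ∧ ∀ y, σ y ∈ MulAction.orbit P y}
  one_mem' := ⟨fun g _ => Commute.one_right g, fun y => MulAction.mem_orbit_self y⟩
  mul_mem' := by
    rintro σ τ ⟨hc, ho⟩ ⟨hc', ho'⟩
    refine ⟨fun g hg => (hc g hg).mul_right (hc' g hg), fun y => ?_⟩
    have h2 : σ (τ y) ∈ MulAction.orbit P (τ y) := ho (τ y)
    rw [MulAction.orbit_eq_iff.mpr (ho' y)] at h2
    simpa using h2
  inv_mem' := by
    rintro σ ⟨hc, ho⟩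
    refine ⟨fun g hg => (hc g hg).inv_right, fun y => ?_⟩
    have h2 : σ (σ⁻¹ y) ∈ MulAction.orbit P (σ⁻¹ y) := ho (σ⁻¹ y)
    rw [show σ (σ⁻¹ y) = y from σ.apply_symm_apply y] at h2
    rw [MulAction.orbit_eq_iff.mpr h2]
    exact MulAction.mem_orbit_self _

private lemma myD_fix {P : Subgroup (Perm X)} {σ : Perm X} (hσ : σ ∈ myD P) {x y : X}
    (hx : σ x = x) (hy : y ∈ MulAction.orbit P x) : σ y = y := by
  obtain ⟨g, rfl⟩ := MulAction.mem_orbit_iff.mp hy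
  have hc := hσ.1 g g.2
  calc σ ((g : Perm X) • x) = (σ * (g : Perm X)) x := rfl
  _ = ((g : Perm X) * σ) x := by rw [hc.eq]
  _ = (g : Perm X) (σ x) := rfl
  _ = (g : Perm X) • x := by rw [hx]; rfl

private lemma myD_le_normalizer {P : Subgroup (Perm X)} : myD P ≤ Subgroup.normalizer (P : Set (Perm X)) := by
  intro σ hσ
  have h := hσ.1
  rw [Subgroup.mem_normalizer_iff]
  intro g
  constructor
  · intro hg
    rw [show σ * g * σ⁻¹ = g from by rw [← (h g hg).eq]; group]
    exact hg
  · intro hg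
    have hc : Commute (σ * g * σ⁻¹) σ := h _ hg
    have : g = σ * g * σ⁻¹ := by
      calc g = σ⁻¹ * ((σ * g * σ⁻¹) * σ) := by group
      _ = σ⁻¹ * (σ * (σ * g * σ⁻¹)) := by rw [hc.eq]
      _ = σ * g * σ⁻¹ := by group
    rw [this]; exact hg

private lemma myD_conj {P : Subgroup (Perm X)} :
    ∀ g ∈ Subgroup.normalizer (P : Set (Perm X)), ∀ σ ∈ myD P, g * σ * g⁻¹ ∈ myD P := by
  intro g hg σ hσ
  constructor
  · intro h hh
    have hh' : g⁻¹ * h * g ∈ P := by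
      have := ((Subgroup.mem_normalizer_iff.mp ((Subgroup.normalizer (P : Set (Perm X))).inv_mem hg)) h).mp hh
      simpa [mul_assoc] using this
    have hc : Commute (g⁻¹ * h * g) σ := hσ.1 _ hh'
    show h * (g * σ * g⁻¹) = (g * σ * g⁻¹) * h
    calc h * (g * σ * g⁻¹) = g * ((g⁻¹ * h * g) * σ) * g⁻¹ := by group
    _ = g * (σ * (g⁻¹ * h * g)) * g⁻¹ := by rw [hc.eq]
    _ = (g * σ * g⁻¹) * h := by group
  · intro y
    obtain ⟨h, hh⟩ := MulAction.mem_orbit_iff.mp (hσ.2 (g⁻¹ y))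
    have hmem : g * (h : Perm X) * g⁻¹ ∈ P :=
      ((Subgroup.mem_normalizer_iff.mp hg) (h : Perm X)).mp h.2
    refine MulAction.mem_orbit_iff.mpr ⟨⟨g * (h : Perm X) * g⁻¹, hmem⟩, ?_⟩
    show (g * (h : Perm X) * g⁻¹) y = (g * σ * g⁻¹) y
    have : (h : Perm X) (g⁻¹ y) = σ (g⁻¹ y) := hh
    simp only [Equiv.Perm.mul_apply]
    rw [this]

private lemma myD_pgroup {p : ℕ} (hp : p.Prime) {P : Subgroup (Perm X)} (hP : IsPGroup p P) :
    IsPGroup p (myD P) := by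
  haveI : Fact p.Prime := ⟨hp⟩
  rw [IsPGroup.iff_card]
  have hpos : Nat.card (myD P) ≠ 0 := Nat.card_pos.ne'
  refine ⟨(Nat.card (myD P)).primeFactorsList.length,
    Nat.eq_prime_pow_of_unique_prime_dvd hpos ?_⟩
  intro q hq hqdvd
  haveI : Fact q.Prime := ⟨hq⟩
  obtain ⟨τ', hτ'⟩ := exists_prime_orderOf_dvd_card' (G := myD P) q (by simpa using hqdvd)
  set τ : Perm X := (τ' : Perm X) with hτdef
  have hτmem : τ ∈ myD P := τ'.2
  have hord : orderOf τ = q := by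
    have h2 := orderOf_injective (myD P).subtype Subtype.coe_injective τ'
    rw [hτdef]; exact h2.trans hτ'
  have hτne : τ ≠ 1 := by
    intro h; rw [h, orderOf_one] at hord; exact hq.one_lt.ne' hord.symm
  obtain ⟨y, hy⟩ : ∃ y, τ y ≠ y := by
    by_contra hcon; push_neg at hcon
    exact hτne (Equiv.ext hcon)
  have hzle : Subgroup.zpowers τ ≤ myD P := (Subgroup.zpowers_le).mpr hτmem
  let S : SubMulAction (Subgroup.zpowers τ) X :=
    { carrier := MulAction.orbit P y
      smul_mem' := by
        intro c z hz
        have hc : (c : Perm X) ∈ myD P := hzle c.2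
        have : (c : Perm X) z ∈ MulAction.orbit P z := hc.2 z
        rw [MulAction.orbit_eq_iff.mpr hz] at this
        exact this }
  have hqgrp : IsPGroup q (Subgroup.zpowers τ) :=
    IsPGroup.of_card (by rw [Nat.card_zpowers, hord, pow_one])
  have hfix : IsEmpty (MulAction.fixedPoints (Subgroup.zpowers τ) S) := by
    refine ⟨fun z => ?_⟩
    have h1 : (⟨τ, Subgroup.mem_zpowers τ⟩ : Subgroup.zpowers τ) • (z : S) = (z : S) := z.2 _
    have h2 : τ ((z : S) : X) = ((z : S) : X) := by
      have h2' := congrArg Subtype.val h1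
      rw [SubMulAction.val_smul] at h2'
      exact h2'
    have hz : ((z : S) : X) ∈ MulAction.orbit P y := (z : S).2
    have : τ y = y := myD_fix hτmem h2 (by
      rw [MulAction.orbit_eq_iff.mpr hz]; exact MulAction.mem_orbit_self _)
    exact hy this
  have hmod := hqgrp.card_modEq_card_fixedPoints S
  rw [Nat.card_of_isEmpty (α := MulAction.fixedPoints (Subgroup.zpowers τ) S)] at hmod
  have hqdvd2 : q ∣ Nat.card S := (Nat.modEq_zero_iff_dvd).mp hmod
  have hdvd3 : Nat.card S ∣ Nat.card P := by
    have : Nat.card S = Nat.card (MulAction.orbit P y) := rfl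
    rw [this, Nat.card_congr (MulAction.orbitEquivQuotientStabilizer P y)]
    exact Subgroup.card_quotient_dvd_card _
  obtain ⟨e, he⟩ := IsPGroup.iff_card.mp hP
  have : q ∣ p ^ e := he ▸ hqdvd2.trans hdvd3
  exact (Nat.prime_dvd_prime_iff_eq hq hp).mp (hq.dvd_of_dvd_pow this)

private lemma exists_c {p : ℕ} (hp : p.Prime) {P : Subgroup (Perm X)} (hP : IsPGroup p P) {x : X}
    (hx : ∃ g : P, (g : Perm X) x ≠ x) :
    ∃ c : Perm X, ((∀ g ∈ P, Commute g c) ∧ ∀ y, c y ∈ MulAction.orbit P y) ∧ c ≠ 1 ∧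
      ∀ y ∉ MulAction.orbit P x, c y = y := by
  classical
  set O : Set X := MulAction.orbit P x with hO
  have hinv : ∀ (g : ↥P) (y : X), y ∈ O ↔ (g : Perm X) y ∈ O := by
    intro g y
    constructor
    · intro hy
      have : (g : Perm X) y ∈ MulAction.orbit P y := ⟨g, rfl⟩
      rwa [MulAction.orbit_eq_iff.mpr hy] at this
    · intro hy
      have : (g⁻¹ : ↥P) • ((g : Perm X) y) ∈ MulAction.orbit P ((g : Perm X) y) :=
        ⟨g⁻¹, rfl⟩
      rw [MulAction.orbit_eq_iff.mpr hy] at this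
      have he : (g⁻¹ : ↥P) • ((g : Perm X) y) = y := by
        show ((g⁻¹ : ↥P) : Perm X) ((g : Perm X) y) = y
        simp
      rwa [he] at this
  let φ : ↥P →* Perm ↥O :=
    { toFun := fun g => (g : Perm X).subtypePerm (fun y => (hinv g y).symm)
      map_one' := by ext a; simp [Equiv.Perm.subtypePerm_apply]
      map_mul' := by intro g h; ext a; simp [Equiv.Perm.subtypePerm_apply]; rfl }
  have hQp : IsPGroup p φ.range := hP.of_surjective φ.rangeRestrict φ.rangeRestrict_surjective
  obtain ⟨g₀, hg₀⟩ := hx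
  have hφg₀ : φ g₀ ≠ 1 := by
    intro h
    have : φ g₀ ⟨x, MulAction.mem_orbit_self x⟩ = ⟨x, MulAction.mem_orbit_self x⟩ := by
      rw [h]; rfl
    have : (g₀ : Perm X) x = x := congrArg Subtype.val this
    exact hg₀ this
  haveI : Nontrivial ↥φ.range := by
    refine ⟨⟨φ g₀, ⟨g₀, rfl⟩⟩, 1, fun h => hφg₀ ?_⟩
    simpa [Subtype.ext_iff] using h
  haveI : Fact p.Prime := ⟨hp⟩
  haveI := hQp.center_nontrivial
  obtain ⟨u, hu⟩ := exists_ne (1 : Subgroup.center ↥φ.range)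
  set z : Perm ↥O := ((u : ↥φ.range) : Perm ↥O) with hzdef
  have hzc : ∀ w ∈ φ.range, Commute w z := by
    intro w hw
    have hcen := Subgroup.mem_center_iff.mp u.2 ⟨w, hw⟩
    have := congrArg (Subtype.val) hcen
    exact this
  have hzne : z ≠ 1 := by
    intro h
    apply hu
    ext : 2
    exact h
  set c : Perm X := Equiv.Perm.ofSubtype z with hcdef
  have hcout : ∀ y ∉ O, c y = y := fun y hy => Equiv.Perm.ofSubtype_apply_of_not_mem z hy
  have hcin : ∀ y (h : y ∈ O), c y = ((z ⟨y, h⟩ : ↥O) : X) :=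
    fun y h => Equiv.Perm.ofSubtype_apply_of_mem z h
  have hcomm : ∀ g ∈ P, Commute g c := by
    intro g hg
    have hgy : ∀ y : X, y ∈ O ↔ g y ∈ O := hinv ⟨g, hg⟩
    show g * c = c * g
    ext y
    simp only [Equiv.Perm.mul_apply]
    by_cases h : y ∈ O
    · have hgyO : g y ∈ O := (hgy y).mp h
      rw [hcin _ hgyO, hcin _ h]
      have hφ : φ ⟨g, hg⟩ ⟨y, h⟩ = ⟨g y, hgyO⟩ := rfl
      have hcom := (hzc (φ ⟨g, hg⟩) ⟨⟨g, hg⟩, rfl⟩).eq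
      calc g ((z ⟨y, h⟩ : ↥O) : X) = ((φ ⟨g, hg⟩ (z ⟨y, h⟩) : ↥O) : X) := rfl
      _ = (((φ ⟨g, hg⟩ * z) ⟨y, h⟩ : ↥O) : X) := rfl
      _ = (((z * φ ⟨g, hg⟩) ⟨y, h⟩ : ↥O) : X) := by rw [hcom]
      _ = ((z (φ ⟨g, hg⟩ ⟨y, h⟩) : ↥O) : X) := rfl
      _ = ((z ⟨g y, hgyO⟩ : ↥O) : X) := by rw [hφ]
    · have hgyO : g y ∉ O := fun hc => h ((hgy y).mpr hc)
      rw [hcout _ hgyO, hcout _ h]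
  have hcorb : ∀ y, c y ∈ MulAction.orbit P y := by
    intro y
    by_cases h : y ∈ O
    · have : c y ∈ O := by rw [hcin _ h]; exact (z ⟨y, h⟩).2
      rwa [MulAction.orbit_eq_iff.mpr h]
    · rw [hcout _ h]; exact MulAction.mem_orbit_self _
  have hcne : c ≠ 1 := by
    obtain ⟨w, hw⟩ : ∃ w : ↥O, z w ≠ w := by
      by_contra hcon; push_neg at hcon
      exact hzne (Equiv.ext hcon)
    intro h
    apply hw
    have : c (w : X) = (w : X) := by rw [h]; rfl
    rw [hcin _ w.2] at this
    ext
    simpa using this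
  exact ⟨c, ⟨hcomm, hcorb⟩, hcne, hcout⟩

private lemma fix_pow {c : Perm X} {A : Set X} (h : ∀ y ∉ A, c y = y) (n : ℕ) :
    ∀ y ∉ A, (c ^ n) y = y := by
  induction n with
  | zero => intro y _; simp
  | succ n ih =>
    intro y hy
    rw [pow_succ, Equiv.Perm.mul_apply, h y hy]
    exact ih y hy

private lemma maps_of_fix {c : Perm X} {A : Set X} (h : ∀ y ∉ A, c y = y) :
    ∀ y ∈ A, c y ∈ A := by
  intro y hy
  by_contra hc
  have h1 : c (c y) = c y := h _ hc
  have h2 := c.injective h1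
  rw [h2] at hc
  exact hc hy

private lemma commute_of_disjoint_support {c c' : Perm X} {A B : Set X}
    (hA : ∀ y ∉ A, c y = y) (hB : ∀ y ∉ B, c' y = y) (hdis : ∀ y, y ∈ A → y ∉ B) :
    Commute c c' := by
  have hmA := maps_of_fix hA
  have hmB := maps_of_fix hB
  show c * c' = c' * c
  ext y
  simp only [Equiv.Perm.mul_apply]
  by_cases h1 : y ∈ A
  · have h2 : y ∉ B := hdis y h1
    rw [hB y h2, hB _ (hdis _ (hmA y h1))]
  · by_cases h2 : y ∈ B
    · have h3 : c' y ∉ A := fun hc => hdis _ hc (hmB y h2)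
      rw [hA y h1, hA _ h3]
    · rw [hA y h1, hB y h2, hA y h1]

end Aux

/-- If P is a p-radical subgroup of the symmetric group on a finite set X with n elements
(i.e. P is a p-subgroup with P = O_p(N(P)): every p-subgroup of the normalizer of P that
is normal in the normalizer is contained in P), then |P| ≥ n − |X^P|. -/
theorem stmt7 (p : ℕ) (hp : p.Prime) (X : Type*) [Fintype X] [DecidableEq X]
    (P : Subgroup (Equiv.Perm X))
    (hpgrp : IsPGroup p P)
    (hrad : ∀ Q : Subgroup (Equiv.Perm X), IsPGroup p Q → Q ≤ Subgroup.normalizer (P : Set (Equiv.Perm X)) →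
      (∀ g ∈ Subgroup.normalizer (P : Set (Equiv.Perm X)), ∀ q ∈ Q, g * q * g⁻¹ ∈ Q) → Q ≤ P) :
    Fintype.card X - Nat.card {x : X // ∀ σ ∈ P, σ x = x} ≤ Nat.card P := by
  classical
  have hD : myD P ≤ P := hrad (myD P) (myD_pgroup hp hpgrp) myD_le_normalizer myD_conj
  set Ω := MulAction.orbitRel.Quotient (↥P) X with hΩdef
  haveI : Fintype Ω := Fintype.ofFinite Ω
  have horb : ∀ ω : Ω, ω.orbit = MulAction.orbit P ω.out :=
    fun ω => MulAction.orbitRel.Quotient.orbit_eq_orbit_out ω Quotient.out_eq'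
  have horb_mem : ∀ (ω : Ω), ∀ y ∈ ω.orbit, MulAction.orbit P y = ω.orbit := by
    intro ω y hy
    have h1 : (Quotient.mk'' y : Ω) = ω := MulAction.orbitRel.Quotient.mem_orbit.mp hy
    rw [← h1, MulAction.orbitRel.Quotient.orbit_mk]
  have hdisj : ∀ ω ω' : Ω, ω ≠ ω' → ∀ y ∈ ω.orbit, y ∉ ω'.orbit := by
    intro ω ω' hne y hy hy'
    exact hne ((MulAction.orbitRel.Quotient.mem_orbit.mp hy).symm.trans
      (MulAction.orbitRel.Quotient.mem_orbit.mp hy'))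
  set a : Ω → ℕ := fun ω => Nat.card ω.orbit with hadef
  have hapos : ∀ ω : Ω, 1 ≤ a ω := by
    intro ω
    haveI : Nonempty ↥(ω.orbit) := ⟨⟨ω.out, by rw [horb ω]; exact MulAction.mem_orbit_self _⟩⟩
    exact Nat.card_pos
  have houtmem : ∀ ω : Ω, ω.out ∈ ω.orbit := by
    intro ω
    rw [horb ω]
    exact MulAction.mem_orbit_self _
  set T : Finset Ω := Finset.univ.filter (fun ω => 1 < a ω) with hTdef
  -- step 1 : card X ≤ card F + ∑_{ω ∈ T} a ω
  have hXsum : Fintype.card X = ∑ ω : Ω, a ω := by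
    rw [← Nat.card_eq_fintype_card, Nat.card_congr (MulAction.selfEquivSigmaOrbits' (↥P) X),
      Nat.card_eq_fintype_card, Fintype.card_sigma]
    exact Finset.sum_congr rfl fun ω _ => (Nat.card_eq_fintype_card (α := ↥(ω.orbit))).symm
  have hsplit : ∑ ω : Ω, a ω = ∑ ω ∈ T, a ω + ∑ ω ∈ Finset.univ.filter (fun ω => ¬ 1 < a ω), a ω :=
    (Finset.sum_filter_add_sum_filter_not Finset.univ _ a).symm
  have hTc1 : ∀ ω ∈ Finset.univ.filter (fun ω => ¬ 1 < a ω), a ω = 1 := by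
    intro ω hω
    have h1 := (Finset.mem_filter.mp hω).2
    have h2 := hapos ω
    omega
  set Tc : Finset Ω := Finset.univ.filter (fun ω => ¬ 1 < a ω) with hTcdef
  have hTcsum : ∑ ω ∈ Tc, a ω = Tc.card := by
    rw [Finset.sum_congr rfl hTc1]
    simp
  have hfixcard : Tc.card ≤ Nat.card {x : X // ∀ σ ∈ P, σ x = x} := by
    have hfun : ∀ ω ∈ Tc, ∀ σ ∈ P, σ ω.out = ω.out := by
      intro ω hω σ hσ
      have h1 : a ω = 1 := hTc1 ω hω
      have h2 : ω.orbit = {ω.out} := by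
        have hmem := houtmem ω
        rw [hadef] at h1
        simp only at h1
        rw [Nat.card_coe_set_eq] at h1
        obtain ⟨b, hb⟩ := Set.ncard_eq_one.mp h1
        rw [hb] at hmem ⊢
        rw [Set.mem_singleton_iff] at hmem
        rw [hmem]
      have h3 : σ ω.out ∈ ω.orbit := by
        rw [horb ω]
        exact ⟨⟨σ, hσ⟩, rfl⟩
      rw [h2, Set.mem_singleton_iff] at h3
      exact h3
    rw [← Fintype.card_coe Tc, Nat.card_eq_fintype_card]
    refine Fintype.card_le_of_injective (fun ω => ⟨(ω : Ω).out, hfun ω ω.2⟩) ?_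
    intro u v huv
    have h4 : (u : Ω).out = (v : Ω).out := congrArg Subtype.val huv
    have := congrArg (Quotient.mk'' : X → Ω) h4
    apply Subtype.ext
    calc (u : Ω) = Quotient.mk'' (u : Ω).out := (Quotient.out_eq' _).symm
    _ = Quotient.mk'' (v : Ω).out := by rw [h4]
    _ = (v : Ω) := Quotient.out_eq' _
  suffices hmain : ∑ ω ∈ T, a ω ≤ Nat.card ↥P by omega
  rcases T.eq_empty_or_nonempty with hT | hTne
  · rw [hT]; simp
  obtain ⟨ω₁, hω₁T, hmax⟩ := T.exists_max_image a hTne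
  have hnontriv : ∀ ω ∈ T, ∃ g : ↥P, (g : Perm X) ω.out ≠ ω.out := by
    intro ω hω
    by_contra hcon
    push_neg at hcon
    have hsingle : ω.orbit = {ω.out} := by
      apply Set.eq_singleton_iff_unique_mem.mpr
      refine ⟨houtmem ω, ?_⟩
      intro y hy
      rw [horb ω] at hy
      obtain ⟨g, rfl⟩ := hy
      exact hcon g
    have h1 : a ω = 1 := by
      rw [hadef]; simp only
      rw [Nat.card_coe_set_eq, hsingle, Set.ncard_singleton]
    have h2 := (Finset.mem_filter.mp hω).2
    omega
  have hcex : ∀ ω ∈ T, ∃ c : Perm X,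
      ((∀ g ∈ P, Commute g c) ∧ ∀ y, c y ∈ MulAction.orbit P y) ∧ c ≠ 1 ∧
        ∀ y ∉ MulAction.orbit P ω.out, c y = y :=
    fun ω hω => exists_c hp hpgrp (hnontriv ω hω)
  choose! cF hc using hcex
  have hmemD : ∀ ω ∈ T, cF ω ∈ myD P := fun ω hω => (hc ω hω).1
  have hmemP : ∀ ω ∈ T, cF ω ∈ P := fun ω hω => hD (hmemD ω hω)
  have hsupp : ∀ ω ∈ T, ∀ y ∉ ω.orbit, cF ω y = y := by
    intro ω hω y hy
    apply (hc ω hω).2.2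
    rwa [← horb ω]
  have hsupp_pow : ∀ ω ∈ T, ∀ n, ∀ y ∉ ω.orbit, (cF ω ^ n) y = y :=
    fun ω hω n => fix_pow (hsupp ω hω) n
  have hmaps_pow : ∀ ω ∈ T, ∀ n, ∀ y ∈ ω.orbit, (cF ω ^ n) y ∈ ω.orbit := by
    intro ω hω n y hy
    have h1 : cF ω ^ n ∈ myD P := pow_mem (hmemD ω hω) n
    have h2 := h1.2 y
    rwa [horb_mem ω y hy] at h2
  haveI : Fact p.Prime := ⟨hp⟩
  have hordp : ∀ ω ∈ T, p ≤ orderOf (cF ω) := by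
    intro ω hω
    obtain ⟨k, hk⟩ := (IsPGroup.iff_orderOf.mp hpgrp) ⟨cF ω, hmemP ω hω⟩
    have hco : orderOf (cF ω) = p ^ k := by
      have h5 := orderOf_injective P.subtype Subtype.coe_injective ⟨cF ω, hmemP ω hω⟩
      rw [hk] at h5
      exact h5
    have hne1 : orderOf (cF ω) ≠ 1 := fun h => (hc ω hω).2.1 (orderOf_eq_one_iff.mp h)
    rcases Nat.eq_zero_or_pos k with rfl | hkpos
    · rw [pow_zero] at hco; exact absurd hco hne1
    · rw [hco]
      calc p = p ^ 1 := (pow_one p).symm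
      _ ≤ p ^ k := Nat.pow_le_pow_right hp.pos hkpos
  set s : Finset Ω := T.erase ω₁ with hsdef
  have hssub : s ⊆ T := Finset.erase_subset _ _
  have hcommT : ∀ (t : Finset Ω), t ⊆ T → ∀ (b : Ω → ℕ),
      (↑t : Set Ω).Pairwise (fun u v => Commute (cF u ^ b u) (cF v ^ b v)) := by
    intro t ht b u hu v hv huv
    have hu' : u ∈ T := ht (by exact_mod_cast hu)
    have hv' : v ∈ T := ht (by exact_mod_cast hv)
    exact commute_of_disjoint_support (hsupp_pow u hu' (b u)) (hsupp_pow v hv' (b v))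
      (hdisj u v huv)
  have L1 : ∀ (t : Finset Ω) (ht : t ⊆ T) (b : Ω → ℕ)
      (hcm : (↑t : Set Ω).Pairwise fun u v => Commute (cF u ^ b u) (cF v ^ b v)) (y : X),
      (∀ ω ∈ t, y ∉ ω.orbit) → t.noncommProd (fun ω => cF ω ^ b ω) hcm y = y := by
    intro t
    induction t using Finset.induction_on with
    | empty => intro _ b hcm y _; rw [Finset.noncommProd_empty]; rfl
    | @insert a0 s0 hnotin ih =>
      intro hsub b hcm y hy
      rw [Finset.noncommProd_insert_of_notMem s0 a0 _ hcm hnotin]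
      simp only [Equiv.Perm.mul_apply]
      rw [ih (fun w hw => hsub (Finset.mem_insert_of_mem hw)) b _ y
        (fun ω hω => hy ω (Finset.mem_insert_of_mem hω))]
      exact hsupp_pow a0 (hsub (Finset.mem_insert_self a0 s0)) (b a0) y
        (hy a0 (Finset.mem_insert_self a0 s0))
  have L2 : ∀ (t : Finset Ω) (ht : t ⊆ T) (b : Ω → ℕ)
      (hcm : (↑t : Set Ω).Pairwise fun u v => Commute (cF u ^ b u) (cF v ^ b v))
      (ω₀ : Ω) (hω₀ : ω₀ ∈ t) (y : X), y ∈ ω₀.orbit →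
      t.noncommProd (fun ω => cF ω ^ b ω) hcm y = (cF ω₀ ^ b ω₀) y := by
    intro t
    induction t using Finset.induction_on with
    | empty => intro _ b hcm ω₀ h; exact absurd h (Finset.notMem_empty _)
    | @insert a0 s0 hnotin ih =>
      intro hsub b hcm ω₀ hω₀ y hy
      rw [Finset.noncommProd_insert_of_notMem s0 a0 _ hcm hnotin]
      simp only [Equiv.Perm.mul_apply]
      have hsub' : s0 ⊆ T := fun w hw => hsub (Finset.mem_insert_of_mem hw)
      rcases Finset.mem_insert.mp hω₀ with rfl | hω₀s
      · have h1 : ∀ ω ∈ s0, y ∉ ω.orbit := by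
          intro ω hω hyω
          exact hdisj ω₀ ω (fun he => hnotin (he ▸ hω)) y hy hyω
        rw [L1 s0 hsub' b _ y h1]
      · rw [ih hsub' b _ ω₀ hω₀s y hy]
        have h2 : (cF ω₀ ^ b ω₀) y ∈ ω₀.orbit :=
          hmaps_pow ω₀ (hsub' hω₀s) _ y hy
        exact hsupp_pow a0 (hsub (Finset.mem_insert_self a0 s0)) (b a0) _
          (hdisj ω₀ a0 (fun he => hnotin (he ▸ hω₀s)) _ h2)
  -- choice of group elements moving ω₁.out to any point of its orbit
  have hgy : ∀ y : ↥(ω₁.orbit), ∃ g : ↥P, (g : Perm X) ω₁.out = (y : X) := by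
    intro y
    have h0 : (y : X) ∈ MulAction.orbit P ω₁.out := by
      rw [← horb ω₁]; exact y.2
    obtain ⟨g, hg⟩ := h0
    exact ⟨g, hg⟩
  choose gY hgY using hgy
  set e : ({ω // ω ∈ s} → Fin p) → Ω → ℕ :=
    fun f ω => if h : ω ∈ s then (f ⟨ω, h⟩ : ℕ) else 0 with hedef
  have hPprod : ∀ f, s.noncommProd (fun ω => cF ω ^ e f ω) (hcommT s hssub (e f)) ∈ P := by
    intro f
    apply Subgroup.noncommProd_mem
    intro ω hω
    exact pow_mem (hmemP ω (hssub hω)) _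
  set Φ : ↥(ω₁.orbit) × ({ω // ω ∈ s} → Fin p) → ↥P := fun yf =>
    ⟨(gY yf.1 : Perm X) * s.noncommProd (fun ω => cF ω ^ e yf.2 ω) (hcommT s hssub (e yf.2)),
      P.mul_mem (gY yf.1).2 (hPprod yf.2)⟩ with hΦdef
  have hout1 : ∀ ω ∈ s, (ω₁.out) ∉ ω.orbit := by
    intro ω hω
    exact hdisj ω₁ ω (fun he => Finset.ne_of_mem_erase hω he.symm) _ (houtmem ω₁)
  have hΦinj : Function.Injective Φ := by
    rintro ⟨y, f⟩ ⟨y', f'⟩ h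
    have hPerm : (Φ (y, f) : Perm X) = (Φ (y', f') : Perm X) := congrArg Subtype.val h
    have hval : ∀ (yy : ↥(ω₁.orbit)) (ff : {ω // ω ∈ s} → Fin p),
        ((Φ (yy, ff) : Perm X)) ω₁.out = (yy : X) := by
      intro yy ff
      show ((gY yy : Perm X) * _) ω₁.out = _
      rw [Equiv.Perm.mul_apply,
        L1 s hssub (e ff) (hcommT s hssub (e ff)) ω₁.out hout1]
      exact hgY yy
    have hy_eq : (y : X) = (y' : X) := by rw [← hval y f, ← hval y' f', hPerm]
    have hyy : y = y' := Subtype.ext hy_eq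
    subst hyy
    have hprods : s.noncommProd (fun ω => cF ω ^ e f ω) (hcommT s hssub (e f)) =
        s.noncommProd (fun ω => cF ω ^ e f' ω) (hcommT s hssub (e f')) :=
      mul_left_cancel hPerm
    have hfeq : f = f' := by
      funext ωs
      obtain ⟨ω, hωs⟩ := ωs
      have hωT : ω ∈ T := hssub hωs
      have hpoweq : cF ω ^ e f ω = cF ω ^ e f' ω := by
        ext z
        by_cases hz : z ∈ ω.orbit
        · have h1 := L2 s hssub (e f) (hcommT s hssub (e f)) ω hωs z hz
          have h2 := L2 s hssub (e f') (hcommT s hssub (e f')) ω hωs z hz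
          rw [← h1, ← h2, hprods]
        · rw [hsupp_pow ω hωT _ z hz, hsupp_pow ω hωT _ z hz]
      have helt : e f ω = (f ⟨ω, hωs⟩ : ℕ) := by rw [hedef]; simp [hωs]
      have helt' : e f' ω = (f' ⟨ω, hωs⟩ : ℕ) := by rw [hedef]; simp [hωs]
      have hlt : e f ω < orderOf (cF ω) :=
        lt_of_lt_of_le (helt ▸ (f ⟨ω, hωs⟩).2) (hordp ω hωT)
      have hlt' : e f' ω < orderOf (cF ω) :=
        lt_of_lt_of_le (helt' ▸ (f' ⟨ω, hωs⟩).2) (hordp ω hωT)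
      have hef : e f ω = e f' ω :=
        pow_injOn_Iio_orderOf (x := cF ω) hlt hlt' hpoweq
      rw [helt, helt'] at hef
      exact Fin.ext hef
    rw [hfeq]
  have hcard := Nat.card_le_card_of_injective Φ hΦinj
  rw [Nat.card_prod, Nat.card_fun] at hcard
  have hfin : Nat.card (Fin p) = p := by
    rw [Nat.card_eq_fintype_card, Fintype.card_fin]
  have hscard : Nat.card {ω // ω ∈ s} = T.card - 1 := by
    rw [Nat.card_eq_fintype_card, Fintype.card_coe, hsdef, Finset.card_erase_of_mem hω₁T]
  rw [hfin, hscard] at hcard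
  -- now: a ω₁ * p ^ (T.card - 1) ≤ Nat.card ↥P
  have hk1 : 1 ≤ T.card := Finset.card_pos.mpr hTne
  have hkle : T.card ≤ p ^ (T.card - 1) := by
    have h2 : T.card - 1 < 2 ^ (T.card - 1) := Nat.lt_two_pow_self
    have h3 : 2 ^ (T.card - 1) ≤ p ^ (T.card - 1) := Nat.pow_le_pow_left hp.two_le _
    omega
  calc ∑ ω ∈ T, a ω ≤ T.card • a ω₁ := Finset.sum_le_card_nsmul T a (a ω₁) hmax
  _ = T.card * a ω₁ := by rw [smul_eq_mul]
  _ ≤ p ^ (T.card - 1) * a ω₁ := Nat.mul_le_mul_right _ hkle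
  _ = a ω₁ * p ^ (T.card - 1) := Nat.mul_comm _ _
  _ ≤ Nat.card ↥P := hcard
end

section
/- Let p be a prime and let X be a finite set with n elements. Suppose 1 = P_0 ⊊ P_1 ⊊ P_2 ⊊ … ⊊ P_k ⊆ Σ_X is a radical p-chain of length k ≥ 2 in the symmetric group Σ_X. Then either |P_k| > n, or p = 2, n = 5, k = 2, and there exist two disjoint transpositions a, b ∈ Σ_X such that P_1 is the subgroup generated by a and P_2 is the subgroup generated by a and b. -/
set_option linter.unusedSectionVars false
set_option maxHeartbeats 1000000
open Equiv

namespace Stmt8Aux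


variable {X : Type*} [Fintype X] [DecidableEq X]

/-- The set of points moved by some element of `H`. -/
def suppS (H : Subgroup (Perm X)) : Set X := {x | ∃ g ∈ H, g x ≠ x}

/-- The set of points fixed by all elements of `H`. -/
def fixS (H : Subgroup (Perm X)) : Set X := {x | ∀ g ∈ H, g x = x}

/-- `Y` is invariant under `H`. -/
def SInv (H : Subgroup (Perm X)) (Y : Set X) : Prop := ∀ g ∈ H, ∀ x ∈ Y, g x ∈ Y

/-- The orbit of `x` under `H`. -/
def orb (H : Subgroup (Perm X)) (x : X) : Set X := {y | ∃ g ∈ H, g x = y}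

lemma mem_orb_self (H : Subgroup (Perm X)) (x : X) : x ∈ orb H x :=
  ⟨1, one_mem _, rfl⟩

lemma apply_mem_orb {H : Subgroup (Perm X)} {g : Perm X} (hg : g ∈ H) {x y : X}
    (hy : y ∈ orb H x) : g y ∈ orb H x := by
  obtain ⟨v, hv, rfl⟩ := hy
  exact ⟨g * v, mul_mem hg hv, rfl⟩

lemma orb_symm {H : Subgroup (Perm X)} {x y : X} (hy : y ∈ orb H x) : x ∈ orb H y := by
  obtain ⟨v, hv, rfl⟩ := hy
  exact ⟨v⁻¹, inv_mem hv, by simp⟩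

lemma orb_eq {H : Subgroup (Perm X)} {x y : X} (hy : y ∈ orb H x) : orb H y = orb H x := by
  obtain ⟨v, hv, rfl⟩ := hy
  ext z
  constructor
  · rintro ⟨w, hw, rfl⟩
    exact ⟨w * v, mul_mem hw hv, by simp⟩
  · rintro ⟨w, hw, rfl⟩
    exact ⟨w * v⁻¹, mul_mem hw (inv_mem hv), by simp⟩

lemma orb_disjoint {H : Subgroup (Perm X)} {x y z : X} (hz : z ∈ orb H x) (hz' : z ∈ orb H y) :
    orb H x = orb H y := by
  rw [← orb_eq hz, ← orb_eq hz']

open scoped Classical in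
/-- The permutation acting as `g` on `Y` and as the identity elsewhere. -/
noncomputable def patch (g : Perm X) (Y : Set X) (h : ∀ x, x ∈ Y ↔ g x ∈ Y) : Perm X where
  toFun x := if x ∈ Y then g x else x
  invFun x := if x ∈ Y then g⁻¹ x else x
  left_inv x := by
    by_cases hx : x ∈ Y
    · simp [hx, (h x).mp hx]
    · simp [hx]
  right_inv x := by
    by_cases hx : x ∈ Y
    · have : g⁻¹ x ∈ Y := by
        rw [h (g⁻¹ x)]; simpa using hx
      simp [hx, show g.symm x ∈ Y from this]
    · simp [hx]

lemma patch_apply_mem {g : Perm X} {Y : Set X} (h : ∀ x, x ∈ Y ↔ g x ∈ Y) {x : X}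
    (hx : x ∈ Y) : patch g Y h x = g x := by
  classical
  simp only [patch, Equiv.coe_fn_mk]
  split <;> first | rfl | exact absurd hx ‹_›

lemma patch_apply_not_mem {g : Perm X} {Y : Set X} (h : ∀ x, x ∈ Y ↔ g x ∈ Y) {x : X}
    (hx : x ∉ Y) : patch g Y h x = x := by
  classical
  simp only [patch, Equiv.coe_fn_mk]
  split <;> first | rfl | exact absurd ‹_› hx

lemma patch_inv_apply_not_mem {g : Perm X} {Y : Set X} (h : ∀ x, x ∈ Y ↔ g x ∈ Y) {x : X}
    (hx : x ∉ Y) : (patch g Y h)⁻¹ x = x := by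
  have := patch_apply_not_mem h hx
  nth_rewrite 1 [← this]
  exact Equiv.symm_apply_apply _ x

/-- `H` is locally closed: restrictions of its elements to invariant sets belong to `H`. -/
def LC (H : Subgroup (Perm X)) : Prop :=
  ∀ g ∈ H, ∀ (Y : Set X) (hY : ∀ x, x ∈ Y ↔ g x ∈ Y), SInv H Y → patch g Y hY ∈ H

lemma lc_bot : LC (⊥ : Subgroup (Perm X)) := by
  intro g hg Y hY _
  rw [Subgroup.mem_bot] at hg
  subst hg
  rw [Subgroup.mem_bot]
  ext x
  by_cases hx : x ∈ Y
  · simp [patch_apply_mem hY hx]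
  · simp [patch_apply_not_mem hY hx]

lemma sinv_orb {H J : Subgroup (Perm X)} (hle : H ≤ J) (x : X) : SInv H (orb J x) :=
  fun g hg y hy => apply_mem_orb (hle hg) hy

/-- Patchwork lemma: if `v` agrees on each `J`-orbit with some element of `Hs ≤ J`,
and `Hs` is locally closed, then `v ∈ Hs`. -/
lemma patchwork (Hs J : Subgroup (Perm X)) (hle : Hs ≤ J) (hlc : LC Hs) (v : Perm X)
    (hv : ∀ x : X, ∃ w ∈ Hs, ∀ y ∈ orb J x, v y = w y) : v ∈ Hs := by
  generalize hn : v.support.card = n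
  induction n using Nat.strong_induction_on generalizing v with
  | _ n IH =>
  rcases Finset.eq_empty_or_nonempty v.support with hemp | ⟨x, hx⟩
  · rw [Equiv.Perm.support_eq_empty_iff] at hemp
    subst hemp; exact one_mem _
  · rw [Equiv.Perm.mem_support] at hx
    obtain ⟨w, hw, hwa⟩ := hv x
    have hwY : ∀ z, z ∈ orb J x ↔ w z ∈ orb J x := by
      intro z
      constructor
      · exact fun hz => apply_mem_orb (hle hw) hz
      · intro hz
        have := apply_mem_orb (inv_mem (hle hw)) hz
        simpa using this
    set O := orb J x with hO
    have hOx : x ∈ O := mem_orb_self J x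
    set u := patch w O hwY with hu
    have huH : u ∈ Hs := hlc w hw O hwY (sinv_orb hle x)
    -- v' = u⁻¹ * v
    set v' := u⁻¹ * v with hv'
    -- facts about v'
    have hfix : ∀ y ∈ O, v' y = y := by
      intro y hy
      have h1 : v y = w y := hwa y hy
      have h2 : u y = w y := patch_apply_mem hwY hy
      simp only [hv', Equiv.Perm.mul_apply, h1, ← h2]
      exact Equiv.symm_apply_apply _ _
    have hoff : ∀ y, y ∉ O → v' y = v y := by
      intro y hy
      obtain ⟨w', hw', hwa'⟩ := hv y
      have hvy : v y ∈ orb J y := by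
        rw [hwa' y (mem_orb_self J y)]
        exact apply_mem_orb (hle hw') (mem_orb_self J y)
      have hvyO : v y ∉ O := by
        intro hmem
        apply hy
        show y ∈ orb J x
        rw [← orb_disjoint hvy hmem]
        exact mem_orb_self J y
      simp only [hv', Equiv.Perm.mul_apply]
      exact patch_inv_apply_not_mem hwY hvyO
    have hv'hyp : ∀ x' : X, ∃ w' ∈ Hs, ∀ y ∈ orb J x', v' y = w' y := by
      intro x'
      by_cases hx' : x' ∈ O
      · refine ⟨1, one_mem _, fun y hy => ?_⟩
        have heq : orb J x' = orb J x := orb_eq hx'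
        rw [heq] at hy
        simpa using hfix y hy
      · obtain ⟨w', hw', hwa'⟩ := hv x'
        refine ⟨w', hw', fun y hy => ?_⟩
        have hyO : y ∉ O := by
          intro hmem
          apply hx'
          show x' ∈ orb J x
          rw [← orb_disjoint hy hmem]
          exact mem_orb_self J x'
        rw [hoff y hyO]
        exact hwa' y hy
    have hsupp : v'.support ⊂ v.support := by
      constructor
      · intro y hy
        rw [Equiv.Perm.mem_support] at hy ⊢
        intro hvy
        by_cases hyO : y ∈ O
        · exact hy (hfix y hyO)
        · rw [hoff y hyO] at hy; exact hy hvy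
      · intro hsub
        have hxs : x ∈ v.support := Equiv.Perm.mem_support.mpr hx
        have := hsub hxs
        rw [Equiv.Perm.mem_support] at this
        exact this (hfix x hOx)
    have hcard : v'.support.card < n := hn ▸ Finset.card_lt_card hsupp
    have hv'mem : v' ∈ Hs := IH _ hcard v' hv'hyp rfl
    have : v = u * v' := by rw [hv']; group
    rw [this]
    exact mul_mem huH hv'mem



variable {X : Type*} [Fintype X] [DecidableEq X]



/-- If `h` agrees with `g ∈ J` on the orbit of `x`, so do the inverses. -/
lemma agrees_inv {J : Subgroup (Perm X)} {g : Perm X} (hg : g ∈ J) {x : X} {h : Perm X}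
    (ha : ∀ y ∈ orb J x, h y = g y) : ∀ y ∈ orb J x, h⁻¹ y = g⁻¹ y := by
  intro y hy
  have hz : g⁻¹ y ∈ orb J x := apply_mem_orb (inv_mem hg) hy
  have : h (g⁻¹ y) = y := by rw [ha _ hz]; simp
  apply h.injective
  simp [show h (g.symm y) = y from this]

/-- The group of all orbit-wise patches of elements of `J`. -/
def orbPatch (J : Subgroup (Perm X)) : Subgroup (Perm X) where
  carrier := {h | ∀ x : X, ∃ g ∈ J, ∀ y ∈ orb J x, h y = g y}
  one_mem' := fun x => ⟨1, one_mem _, fun _ _ => rfl⟩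
  mul_mem' := by
    rintro h₁ h₂ hh₁ hh₂ x
    obtain ⟨g₂, hg₂, ha₂⟩ := hh₂ x
    obtain ⟨g₁, hg₁, ha₁⟩ := hh₁ x
    refine ⟨g₁ * g₂, mul_mem hg₁ hg₂, fun y hy => ?_⟩
    have h2y : g₂ y ∈ orb J x := apply_mem_orb hg₂ hy
    simp only [Equiv.Perm.mul_apply]
    rw [ha₂ y hy, ha₁ _ h2y]
  inv_mem' := by
    rintro h hh x
    obtain ⟨g, hg, ha⟩ := hh x
    exact ⟨g⁻¹, inv_mem hg, agrees_inv hg ha⟩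

lemma mem_orbPatch {J : Subgroup (Perm X)} {h : Perm X} :
    h ∈ orbPatch J ↔ ∀ x : X, ∃ g ∈ J, ∀ y ∈ orb J x, h y = g y := Iff.rfl

lemma le_orbPatch {J : Subgroup (Perm X)} : J ≤ orbPatch J := by
  intro g hg
  exact fun x => ⟨g, hg, fun _ _ => rfl⟩

/-- `orbPatch J` is a `p`-group (needs primality). -/
lemma orbPatch_pgroup' {p : ℕ} (hp : p.Prime) {J : Subgroup (Perm X)} (hJ : IsPGroup p J) :
    IsPGroup p (orbPatch J) := by
  haveI : Fact p.Prime := ⟨hp⟩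
  obtain ⟨n, hn⟩ := IsPGroup.iff_card.mp hJ
  have hkill : ∀ g ∈ J, g ^ (p ^ n) = 1 := by
    intro g hg
    have := pow_card_eq_one' (G := J) (x := ⟨g, hg⟩)
    rw [hn] at this
    exact_mod_cast congrArg (Subgroup.subtype J) this
  intro h
  refine ⟨n, ?_⟩
  have key : ∀ (m : ℕ) (x : X) (g : Perm X), g ∈ J → (∀ y ∈ orb J x, (h : Perm X) y = g y) →
      ∀ y ∈ orb J x, ((h : Perm X) ^ m) y = (g ^ m) y := by
    intro m x g hg ha
    induction m with
    | zero => intro y hy; simp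
    | succ m IH =>
      intro y hy
      rw [pow_succ, pow_succ]
      simp only [Equiv.Perm.mul_apply]
      rw [ha y hy]
      exact IH (g y) (apply_mem_orb hg hy)
  have : ((h : Perm X)) ^ (p ^ n) = 1 := by
    ext y
    obtain ⟨g, hg, ha⟩ := h.2 y
    have := key (p ^ n) y g hg ha y (mem_orb_self J y)
    rw [this, hkill g hg]
  exact Subtype.ext (by simpa using this)

/-- Conjugation by a normalizer element preserves `orbPatch J`. -/
lemma conj_orbPatch {J : Subgroup (Perm X)} {g : Perm X} (hg : g ∈ Subgroup.normalizer (J : Set (Perm X)))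
    {h : Perm X} (hh : h ∈ orbPatch J) : g * h * g⁻¹ ∈ orbPatch J := by
  intro x
  obtain ⟨w, hw, ha⟩ := hh (g⁻¹ x)
  refine ⟨g * w * g⁻¹, (Subgroup.mem_normalizer_iff.mp hg w).mp hw, fun y hy => ?_⟩
  have hy' : g⁻¹ y ∈ orb J (g⁻¹ x) := by
    obtain ⟨v, hv, rfl⟩ := hy
    refine ⟨g⁻¹ * v * g, ?_, by simp [Equiv.Perm.mul_apply]⟩
    have := (Subgroup.mem_normalizer_iff.mp (inv_mem hg) v).mp hv
    simpa using this
  simp only [Equiv.Perm.mul_apply]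
  rw [ha _ hy']

/-- Any element of `orbPatch J` normalizes a locally closed `Hs ≤ J` normalized by `J`. -/
lemma orbPatch_le_normalizer_of_LC {Hs J : Subgroup (Perm X)} (hle : Hs ≤ J) (hlc : LC Hs)
    (hnorm : ∀ g ∈ J, ∀ u ∈ Hs, g * u * g⁻¹ ∈ Hs) :
    orbPatch J ≤ Subgroup.normalizer (Hs : Set (Perm X)) := by
  have main : ∀ h ∈ orbPatch J, ∀ u ∈ Hs, h * u * h⁻¹ ∈ Hs := by
    intro h hh u hu
    apply patchwork Hs J hle hlc
    intro x
    obtain ⟨g, hg, ha⟩ := hh x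
    refine ⟨g * u * g⁻¹, hnorm g hg u hu, fun y hy => ?_⟩
    have h1 : h⁻¹ y = g⁻¹ y := agrees_inv hg ha y hy
    have h2 : u (g⁻¹ y) ∈ orb J x := by
      have : g⁻¹ y ∈ orb J x := apply_mem_orb (inv_mem hg) hy
      exact apply_mem_orb (hle hu) this
    simp only [Equiv.Perm.mul_apply]
    rw [h1, ha _ h2]
  intro h hh
  replace hh : h ∈ orbPatch J := hh
  rw [Subgroup.mem_normalizer_iff]
  intro u
  constructor
  · intro hu
    exact main h hh u hu
  · intro hu
    have := main h⁻¹ (inv_mem hh) _ hu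
    simpa [mul_assoc] using this
lemma lc_of_orbPatch_le {J : Subgroup (Perm X)} (h : orbPatch J ≤ J) : LC J := by
  intro g hg Y hY hinv
  apply h
  intro x
  by_cases hx : x ∈ Y
  · refine ⟨g, hg, fun y hy => ?_⟩
    have hyY : y ∈ Y := by
      obtain ⟨v, hv, rfl⟩ := hy
      exact hinv v hv x hx
    exact patch_apply_mem hY hyY
  · refine ⟨1, one_mem _, fun y hy => ?_⟩
    have hyY : y ∉ Y := by
      intro hmem
      obtain ⟨v, hv, hvx⟩ := orb_symm hy
      exact hx (hvx ▸ hinv v hv y hmem)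
    rw [patch_apply_not_mem hY hyY]
    rfl

/-- Main step: a p-radical subgroup (in the chain sense) equals its orbit-patch closure. -/
lemma radical_eq_orbPatch {p : ℕ} (hp : p.Prime) (J N : Subgroup (Perm X))
    (hJN : J ≤ N) (hNnorm : N ≤ Subgroup.normalizer (J : Set (Perm X))) (hJp : IsPGroup p J)
    (hmax : ∀ Q : Subgroup (Perm X), Q ≤ N → IsPGroup p Q →
      (∀ g ∈ N, ∀ x ∈ Q, g * x * g⁻¹ ∈ Q) → Q ≤ J)
    (hR : orbPatch J ⊓ Subgroup.normalizer (J : Set (Perm X)) ≤ N) : orbPatch J = J := by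
  set R := orbPatch J ⊓ Subgroup.normalizer (J : Set (Perm X)) with hRdef
  have hRp : IsPGroup p R := (orbPatch_pgroup' hp hJp).to_le inf_le_left
  have hRconj : ∀ g ∈ N, ∀ x ∈ R, g * x * g⁻¹ ∈ R := by
    intro g hg x hx
    have hgn : g ∈ Subgroup.normalizer (J : Set (Perm X)) := hNnorm hg
    rw [hRdef, Subgroup.mem_inf] at hx
    rw [hRdef, Subgroup.mem_inf]
    exact ⟨conj_orbPatch hgn hx.1, mul_mem (mul_mem hgn hx.2) (inv_mem hgn)⟩
  have hRJ : R ≤ J := hmax R hR hRp hRconj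
  -- now use the normalizer condition in the p-group orbPatch J
  by_contra hne
  have hJle : J ≤ orbPatch J := le_orbPatch
  haveI : Fact p.Prime := ⟨hp⟩
  haveI : Finite (orbPatch J) := inferInstance
  have hnil : Group.IsNilpotent (orbPatch J) := (orbPatch_pgroup' hp hJp).isNilpotent
  have hnc : NormalizerCondition (orbPatch J) := normalizerCondition_of_isNilpotent
  set H' : Subgroup (orbPatch J) := J.subgroupOf (orbPatch J) with hH'
  have hH'top : H' ≠ ⊤ := by
    intro htop
    apply hne
    apply le_antisymm _ hJle
    intro q hq
    have : (⟨q, hq⟩ : orbPatch J) ∈ H' := htop ▸ Subgroup.mem_top _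
    exact (Subgroup.mem_subgroupOf).mp this
  have hlt := hnc H' (lt_top_iff_ne_top.mpr hH'top)
  obtain ⟨q, hqn, hqH⟩ := SetLike.exists_of_lt hlt
  apply hqH
  have hq' : (q : Perm X) ∈ orbPatch J := SetLike.coe_mem q
  have hqR : (q : Perm X) ∈ R := by
    refine ⟨hq', ?_⟩
    show (q : Perm X) ∈ Subgroup.normalizer (J : Set (Perm X))
    rw [Subgroup.mem_normalizer_iff]
    intro u
    constructor
    · intro hu
      have huo : u ∈ orbPatch J := hJle hu
      have : (⟨u, huo⟩ : orbPatch J) ∈ H' := Subgroup.mem_subgroupOf.mpr hu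
      have h2 := (Subgroup.mem_normalizer_iff.mp hqn _).mp this
      have := Subgroup.mem_subgroupOf.mp h2
      exact_mod_cast this
    · intro hu
      have huo : (q : Perm X) * u * (q : Perm X)⁻¹ ∈ orbPatch J := hJle hu
      have huo2 : u ∈ orbPatch J := by
        have := mul_mem (mul_mem (inv_mem hq') huo) hq'
        simpa [mul_assoc] using this
      have h2 : ((q * ⟨u, huo2⟩ * q⁻¹ : orbPatch J) : Perm X) ∈ J := by
        exact_mod_cast hu
      have h3 : (q * ⟨u, huo2⟩ * q⁻¹ : orbPatch J) ∈ H' := Subgroup.mem_subgroupOf.mpr h2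
      exact Subgroup.mem_subgroupOf.mp
        ((Subgroup.mem_normalizer_iff.mp hqn (⟨u, huo2⟩ : orbPatch J)).mpr h3)
  exact Subgroup.mem_subgroupOf.mpr (hRJ hqR)



variable {X : Type*} [Fintype X] [DecidableEq X]



/-- The subgroup of permutations fixing every point outside `F`. -/
def fixOut (F : Set X) : Subgroup (Perm X) where
  carrier := {g | ∀ x ∉ F, g x = x}
  one_mem' := fun x _ => rfl
  mul_mem' := by
    intro a b ha hb x hx
    simp only [Equiv.Perm.mul_apply]
    rw [hb x hx, ha x hx]
  inv_mem' := by
    intro a ha x hx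
    have := ha x hx
    nth_rewrite 1 [← this]
    exact Equiv.symm_apply_apply _ x

lemma mem_fixOut {F : Set X} {g : Perm X} : g ∈ fixOut F ↔ ∀ x ∉ F, g x = x := Iff.rfl

lemma fixOut_apply_mem {F : Set X} {g : Perm X} (hg : g ∈ fixOut F) {x : X} (hx : x ∈ F) :
    g x ∈ F := by
  by_contra hgx
  have h1 : g (g x) = g x := hg _ hgx
  have h2 : g x = x := g.injective h1
  rw [h2] at hgx
  exact hgx hx

lemma fixOut_mono {F F' : Set X} (h : F ⊆ F') : fixOut F ≤ fixOut F' := by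
  intro g hg x hx
  exact hg x (fun hc => hx (h hc))

lemma orb_subset_suppS {H : Subgroup (Perm X)} {x : X} (hxs : x ∈ suppS H) :
    orb H x ⊆ suppS H := by
  rintro y ⟨v, hv, rfl⟩
  obtain ⟨g, hg, hgx⟩ := hxs
  exact ⟨v * g * v⁻¹, mul_mem (mul_mem hv hg) (inv_mem hv),
    by simp only [Equiv.Perm.mul_apply]; simpa using fun hc => hgx (v.injective hc)⟩

lemma two_le_orb_ncard {H : Subgroup (Perm X)} {x : X} (hxs : x ∈ suppS H) :
    2 ≤ (orb H x).ncard := by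
  obtain ⟨g, hg, hgx⟩ := hxs
  have h1 : x ∈ orb H x := mem_orb_self H x
  have h2 : g x ∈ orb H x := ⟨g, hg, rfl⟩
  exact (Set.one_lt_ncard (Set.toFinite _)).mpr ⟨g x, h2, x, h1, hgx⟩

/-- subgroup of elements of H supported inside Y -/
def within (H : Subgroup (Perm X)) (Y : Set X) : Subgroup (Perm X) := H ⊓ fixOut Y

lemma card_mul_card_le_of_inj {H K L : Subgroup (Perm X)} (hH : H ≤ L) (hK : K ≤ L)
    (htriv : ∀ x, x ∈ H → x ∈ K → x = 1) :
    Nat.card H * Nat.card K ≤ Nat.card L := by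
  have hinj : Function.Injective (fun z : (↥H × ↥K) => (⟨z.1.1 * z.2.1,
      mul_mem (hH z.1.2) (hK z.2.2)⟩ : ↥L)) := by
    rintro ⟨⟨a, ha⟩, ⟨b, hb⟩⟩ ⟨⟨c, hc⟩, ⟨d, hd⟩⟩ h
    simp only [Subtype.mk.injEq] at h
    have key : c⁻¹ * a = d * b⁻¹ := by
      have := congrArg (fun z => c⁻¹ * z * b⁻¹) h
      simpa [mul_assoc] using this
    have h1 : c⁻¹ * a ∈ H := mul_mem (inv_mem hc) ha
    have h2 : c⁻¹ * a ∈ K := by rw [key]; exact mul_mem hd (inv_mem hb)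
    have := htriv _ h1 h2
    have hac : a = c := by
      have : c * (c⁻¹ * a) = c * 1 := by rw [this]
      simpa using this
    have hbd : b = d := by
      have : c⁻¹ * a = 1 := ‹c⁻¹ * a = 1›
      rw [key] at this
      have : d * b⁻¹ * b = 1 * b := by rw [this]
      simpa using this.symm
    simp [hac, hbd]
  calc Nat.card H * Nat.card K = Nat.card (↥H × ↥K) := (Nat.card_prod _ _).symm
    _ ≤ Nat.card L := Nat.card_le_card_of_injective _ hinj

/-- Key counting: a locally closed subgroup has at least as many elements as its support. -/
lemma suppS_ncard_le_card (H : Subgroup (Perm X)) (hlc : LC H) :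
    (suppS H).ncard ≤ Nat.card H := by
  -- general statement by strong induction
  suffices hgen : ∀ (n : ℕ) (Y : Set X), SInv H Y → (Y ∩ suppS H).ncard = n →
      n ≤ Nat.card (within H Y) by
    have h1 := hgen ((Set.univ ∩ suppS H).ncard) Set.univ (fun _ _ _ _ => trivial) rfl
    rw [Set.univ_inter] at h1
    refine h1.trans (Nat.le_of_dvd Nat.card_pos (Subgroup.card_dvd_of_le inf_le_left))
  intro n
  induction n using Nat.strong_induction_on with
  | _ n IH =>
  intro Y hYinv hcard
  rcases Nat.eq_zero_or_pos n with rfl | hn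
  · exact Nat.zero_le _
  · have hne : (Y ∩ suppS H).Nonempty := by
      rw [← Set.ncard_pos (Set.toFinite _), hcard]; exact hn
    obtain ⟨x, hxY, hxs⟩ := hne
    set O := orb H x with hO
    have hOx : x ∈ O := mem_orb_self H x
    have hOY : O ⊆ Y := by
      rintro y ⟨g, hg, rfl⟩
      exact hYinv g hg x hxY
    have hOsupp : O ⊆ suppS H := by
      rintro y ⟨v, hv, rfl⟩
      obtain ⟨g, hg, hgx⟩ := hxs
      exact ⟨v * g * v⁻¹, mul_mem (mul_mem hv hg) (inv_mem hv),
        by simp only [Equiv.Perm.mul_apply]; simpa using fun hc => hgx (v.injective hc)⟩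
    -- for each y in O there is an element of H supported in O sending x to y
    have hsig : ∀ y ∈ O, ∃ s : Perm X, s ∈ within H O ∧ s x = y := by
      rintro y ⟨v, hv, rfl⟩
      have hOiff : ∀ z, z ∈ O ↔ v z ∈ O := by
        intro z
        constructor
        · exact fun hz => apply_mem_orb hv hz
        · intro hz; have := apply_mem_orb (inv_mem hv) hz; simpa using this
      refine ⟨patch v O hOiff, ⟨hlc v hv O hOiff (fun g hg z hz => apply_mem_orb hg hz), ?_⟩,
        patch_apply_mem hOiff (mem_orb_self H x)⟩
      intro z hz
      exact patch_apply_not_mem hOiff hz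
    -- cardinalities
    have hO2 : 2 ≤ O.ncard := two_le_orb_ncard hxs
    -- invariance and induction on Y \ O
    have hYO : SInv H (Y \ O) := by
      intro g hg y hy
      refine ⟨hYinv g hg y hy.1, fun hc => hy.2 ?_⟩
      have := apply_mem_orb (inv_mem hg) hc
      simpa using this
    have hdisj : Disjoint O ((Y \ O) ∩ suppS H) := by
      rw [Set.disjoint_left]
      rintro z hz ⟨⟨_, hz2⟩, _⟩
      exact hz2 hz
    have hsplit : Y ∩ suppS H = O ∪ ((Y \ O) ∩ suppS H) := by
      ext z
      constructor
      · rintro ⟨hz1, hz2⟩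
        by_cases hzO : z ∈ O
        · exact Or.inl hzO
        · exact Or.inr ⟨⟨hz1, hzO⟩, hz2⟩
      · rintro (hz | ⟨⟨hz1, _⟩, hz2⟩)
        · exact ⟨hOY hz, hOsupp hz⟩
        · exact ⟨hz1, hz2⟩
    set n' := ((Y \ O) ∩ suppS H).ncard with hn'
    have hnsum : n = O.ncard + n' := by
      rw [← hcard, hsplit, Set.ncard_union_eq hdisj (Set.toFinite _) (Set.toFinite _)]
    have hn'lt : n' < n := by omega
    have hIH : n' ≤ Nat.card (within H (Y \ O)) := IH n' hn'lt (Y \ O) hYO rfl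
    -- injection
    have hinj : O.ncard * Nat.card (within H (Y \ O)) ≤ Nat.card (within H Y) := by
      choose sig hsig1 hsig2 using hsig
      have hmap : ∀ (y : ↥O) (k : ↥(within H (Y \ O))),
          (sig y.1 y.2) * k.1 ∈ within H Y := by
        rintro ⟨y, hy⟩ ⟨kk, hk⟩
        refine mul_mem ?_ ?_
        · exact ⟨(hsig1 y hy).1, fun z hz => (hsig1 y hy).2 z (fun hzO => hz (hOY hzO))⟩
        · exact ⟨hk.1, fun z hz => hk.2 z (fun hzY => hz hzY.1)⟩
      have hinj2 : Function.Injective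
          (fun z : (↥O × ↥(within H (Y \ O))) =>
            (⟨(sig z.1.1 z.1.2) * z.2.1, hmap z.1 z.2⟩ : ↥(within H Y))) := by
        rintro ⟨⟨y, hy⟩, ⟨kk, hk⟩⟩ ⟨⟨y', hy'⟩, ⟨kk', hk'⟩⟩ h
        simp only [Subtype.mk.injEq] at h
        have hkx : kk x = x := hk.2 x (fun hc => hc.2 hOx)
        have hkx' : kk' x = x := hk'.2 x (fun hc => hc.2 hOx)
        have happ := congrArg (fun (q : Perm X) => q x) h
        simp only [Equiv.Perm.mul_apply, hkx, hkx'] at happ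
        rw [hsig2 y hy, hsig2 y' hy'] at happ
        subst happ
        have hkk : kk = kk' := mul_left_cancel h
        subst hkk
        rfl
      calc O.ncard * Nat.card (within H (Y \ O))
          = Nat.card (↥O × ↥(within H (Y \ O))) := by
            rw [Nat.card_prod, Nat.card_coe_set_eq]
        _ ≤ Nat.card (within H Y) := Nat.card_le_card_of_injective _ hinj2
    -- conclude arithmetic
    rcases Nat.eq_zero_or_pos n' with hz | hpos
    · have : n = O.ncard := by omega
      rw [this]
      calc O.ncard = O.ncard * 1 := (mul_one _).symm
        _ ≤ O.ncard * Nat.card (within H (Y \ O)) := by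
            exact Nat.mul_le_mul_left _ Nat.card_pos
        _ ≤ _ := hinj
    · have hn'2 : 2 ≤ n' := by
        obtain ⟨z, hzmem⟩ := (Set.ncard_pos (Set.toFinite _)).mp hpos
        have hsub : orb H z ⊆ (Y \ O) ∩ suppS H := by
          intro w hw
          refine ⟨⟨?_, ?_⟩, orb_subset_suppS hzmem.2 hw⟩
          · obtain ⟨v, hv, rfl⟩ := hw
            exact hYinv v hv z hzmem.1.1
          · intro hwO
            have : O = orb H z := orb_disjoint hwO (by exact hw)
            exact hzmem.1.2 (this ▸ mem_orb_self H z)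
        calc 2 ≤ (orb H z).ncard := two_le_orb_ncard hzmem.2
          _ ≤ n' := Set.ncard_le_ncard hsub (Set.toFinite _)
      calc n = O.ncard + n' := hnsum
        _ ≤ O.ncard * n' := Nat.add_le_mul hO2 hn'2
        _ ≤ O.ncard * Nat.card (within H (Y \ O)) := Nat.mul_le_mul_left _ hIH
        _ ≤ _ := hinj



variable {X : Type*} [Fintype X] [DecidableEq X]



lemma sub_eq_of_le_card {G : Type*} [Group G] [Finite G] {H K : Subgroup G} (h : H ≤ K)
    (hc : Nat.card K ≤ Nat.card H) : H = K := by
  have hinj : Function.Injective (Subgroup.inclusion h) := Subgroup.inclusion_injective h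
  have hbij : Function.Bijective (Subgroup.inclusion h) := by
    rw [Nat.bijective_iff_injective_and_card]
    exact ⟨hinj, le_antisymm (Nat.card_le_card_of_injective _ hinj) hc ▸ rfl⟩
  ext x
  refine ⟨fun hx => h hx, fun hx => ?_⟩
  obtain ⟨⟨y, hy⟩, hxy⟩ := hbij.2 ⟨x, hx⟩
  have : y = x := congrArg Subtype.val hxy
  exact this ▸ hy

lemma card_step {G : Type*} [Group G] [Finite G] {p : ℕ} (hp : p.Prime) {H K : Subgroup G}
    (hH : IsPGroup p H) (hK : IsPGroup p K) (hlt : H < K) :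
    p * Nat.card H ≤ Nat.card K := by
  haveI : Fact p.Prime := ⟨hp⟩
  obtain ⟨a, ha⟩ := IsPGroup.iff_card.mp hH
  obtain ⟨b, hb⟩ := IsPGroup.iff_card.mp hK
  have hdvd : Nat.card H ∣ Nat.card K := Subgroup.card_dvd_of_le hlt.le
  rw [ha, hb] at hdvd ⊢
  have hab : a ≤ b := (Nat.pow_dvd_pow_iff_le_right hp.one_lt).mp hdvd
  have hne : a ≠ b := by
    intro hEq
    subst hEq
    exact hlt.ne (sub_eq_of_le_card hlt.le (le_of_eq (hb.trans ha.symm)))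
  calc p * p ^ a = p ^ (a + 1) := by ring
    _ ≤ p ^ b := Nat.pow_le_pow_right hp.pos (by omega)

/-- Cardinality of the group of permutations supported in `F`. -/
lemma card_fixOut (F : Set X) : Nat.card (fixOut F) = (F.ncard).factorial := by
  classical
  have hinj : Function.Injective (Equiv.Perm.ofSubtype : Perm (↥F) →* Perm X) := by
    intro σ τ h
    ext ⟨y, hy⟩
    have := congrArg (fun (q : Perm X) => q y) h
    simpa [Equiv.Perm.ofSubtype_apply_of_mem σ hy, Equiv.Perm.ofSubtype_apply_of_mem τ hy]
      using this
  have hrange : (Equiv.Perm.ofSubtype : Perm (↥F) →* Perm X).range = fixOut F := by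
    ext g
    constructor
    · rintro ⟨σ, rfl⟩
      rw [mem_fixOut]
      intro x hx
      exact Equiv.Perm.ofSubtype_apply_of_not_mem σ hx
    · intro hg
      rw [mem_fixOut] at hg
      have hfix : ∀ x : X, x ∈ F ↔ g x ∈ F := by
        intro x
        constructor
        · intro hx
          by_contra hgx
          have h1 : g (g x) = g x := hg _ hgx
          have h2 : g x = x := g.injective h1
          rw [h2] at hgx; exact hgx hx
        · intro hx
          by_contra hxx
          rw [hg x hxx] at hx
          exact hxx hx
      refine ⟨g.subtypePerm (fun x => (hfix x).symm), ?_⟩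
      ext x
      by_cases hx : x ∈ F
      · rw [Equiv.Perm.ofSubtype_apply_of_mem _ hx]
        rfl
      · rw [Equiv.Perm.ofSubtype_apply_of_not_mem _ hx, hg x hx]
  have h1 : Nat.card (Perm (↥F)) = Nat.card (fixOut F) := by
    rw [← hrange]
    exact Nat.card_congr (MonoidHom.ofInjective hinj).toEquiv
  rw [← h1]
  haveI : Fintype ↥F := Fintype.ofFinite ↥F
  rw [Nat.card_eq_fintype_card, Fintype.card_perm]
  congr 1
  rw [← Nat.card_coe_set_eq, Nat.card_eq_fintype_card]

/-- restriction: the order of `H` divides the factorial of its support size. -/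
lemma card_dvd_factorial_suppS (H : Subgroup (Perm X)) :
    Nat.card H ∣ ((suppS H).ncard).factorial := by
  classical
  -- H ≤ fixOut (suppS H), and card fixOut = factorial
  have hle : H ≤ fixOut (suppS H) := by
    intro g hg
    rw [mem_fixOut]
    intro x hx
    by_contra hc
    exact hx ⟨g, hg, hc⟩
  calc Nat.card H ∣ Nat.card (fixOut (suppS H)) := Subgroup.card_dvd_of_le hle
    _ = _ := card_fixOut _

lemma pow_div_dvd_factorial {p : ℕ} (hp : p.Prime) (f : ℕ) : p ^ (f / p) ∣ f.factorial := by
  have key : ∀ q : ℕ, p ^ q ∣ (p * q).factorial := by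
    intro q
    induction q with
    | zero => simp
    | succ q IH =>
      have hppos := hp.pos
      have hstep : p * (q + 1) = (p * q + (p - 1)) + 1 := by
        have : p * (q + 1) = p * q + p := by ring
        omega
      rw [hstep, Nat.factorial_succ]
      have h1 : (p * q).factorial ∣ (p * q + (p - 1)).factorial :=
        Nat.factorial_dvd_factorial (Nat.le_add_right _ _)
      have h2 : p ∣ (p * q + (p - 1)) + 1 := by
        rw [← hstep]
        exact dvd_mul_right p (q + 1)
      rw [pow_succ, mul_comm]
      exact mul_dvd_mul h2 (IH.trans h1)
  exact (key (f / p)).trans (Nat.factorial_dvd_factorial (Nat.mul_div_le f p))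

/-- In a finite group, if `S` is a maximal p-subgroup of `N` and `T ≤ N` is `N`-conjugation
stable, then the full p-part of `|T|` divides `|S ⊓ T|`. -/
lemma sylow_inf_card {G : Type*} [Group G] [Finite G] {p : ℕ} (hp : p.Prime)
    (N S T : Subgroup G) (hSN : S ≤ N) (hTN : T ≤ N) (hSp : IsPGroup p S)
    (hmax : ∀ Q : Subgroup G, Q ≤ N → IsPGroup p Q → S ≤ Q → Q = S)
    (hTnorm : ∀ g ∈ N, ∀ t ∈ T, g * t * g⁻¹ ∈ T)
    {q : ℕ} (hdvd : p ^ q ∣ Nat.card T) : p ^ q ∣ Nat.card ↥(S ⊓ T) := by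
  haveI : Fact p.Prime := ⟨hp⟩
  set S' := S.subgroupOf N with hS'
  set T' := T.subgroupOf N with hT'
  haveI hT'norm : T'.Normal := by
    constructor
    intro t ht g
    rw [hT', Subgroup.mem_subgroupOf] at ht ⊢
    exact hTnorm g.1 g.2 t.1 ht
  -- S' is a Sylow subgroup of ↥N
  have hS'p : IsPGroup p S' := hSp.of_equiv (Subgroup.subgroupOfEquivOfLe hSN).symm
  obtain ⟨Q, hQ⟩ := hS'p.exists_le_sylow
  have hQS : (Q : Subgroup ↥N) = S' := by
    have hmap : (Q : Subgroup ↥N).map N.subtype = S := by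
      apply hmax
      · exact Subgroup.map_subtype_le _
      · exact Q.2.map _
      · have := Subgroup.map_mono (f := N.subtype) hQ
        rwa [hS', Subgroup.subgroupOf_map_subtype, inf_eq_left.mpr hSN] at this
    have hmap2 : S'.map N.subtype = S := by
      rw [hS', Subgroup.subgroupOf_map_subtype, inf_eq_left.mpr hSN]
    exact Subgroup.map_injective N.subtype_injective (hmap.trans hmap2.symm)
  have hSindex : ¬ p ∣ S'.index := by
    rw [← hQS]
    haveI : (Q : Subgroup ↥N).FiniteIndex := ⟨Subgroup.index_ne_zero_of_finite⟩
    exact Q.not_dvd_index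
  have hcardrel : ∀ A B : Subgroup ↥N, Nat.card ↥(A.subgroupOf B) = Nat.card ↥(A ⊓ B) := by
    intro A B
    rw [← Subgroup.inf_subgroupOf_right]
    exact Nat.card_congr (Subgroup.subgroupOfEquivOfLe inf_le_right).toEquiv
  have hmulrel : ∀ A B : Subgroup ↥N, Nat.card ↥(A ⊓ B) * A.relIndex B = Nat.card B := by
    intro A B
    have h1 := Subgroup.card_mul_index (A.subgroupOf B)
    rw [hcardrel] at h1
    exact h1
  set i := Nat.card ↥(S' ⊓ T') with hidef
  set d := S'.relIndex T' with hd
  set e := T'.relIndex S' with he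
  set u := S'.relIndex (S' ⊔ T') with hu
  have hiT : i * d = Nat.card T' := hmulrel S' T'
  have hiS : i * e = Nat.card S' := by
    have := hmulrel T' S'
    rwa [inf_comm] at this
  have hTsup : Nat.card T' * e = Nat.card ↥(S' ⊔ T') := by
    have h1 := Subgroup.card_mul_index (T'.subgroupOf (S' ⊔ T'))
    rw [hcardrel] at h1
    rw [inf_eq_left.mpr le_sup_right] at h1
    have h2 : T'.relIndex (S' ⊔ T') = e := Subgroup.relIndex_sup_right S' T'
    rw [← h2]
    exact h1
  have hSsup : Nat.card S' * u = Nat.card ↥(S' ⊔ T') := by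
    have h1 := Subgroup.card_mul_index (S'.subgroupOf (S' ⊔ T'))
    rw [hcardrel] at h1
    rw [inf_eq_left.mpr le_sup_left] at h1
    exact h1
  have hipos : 0 < i := Nat.card_pos
  have hepos : 0 < e := Nat.pos_of_ne_zero (by
    rw [he, Subgroup.relIndex]
    exact Subgroup.index_ne_zero_of_finite)
  have hdu : d = u := by
    have hchain : i * d * e = i * e * u := by
      rw [mul_comm (i*d) e]
      calc e * (i * d) = Nat.card T' * e := by rw [hiT]; ring
        _ = Nat.card ↥(S' ⊔ T') := hTsup
        _ = Nat.card S' * u := hSsup.symm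
        _ = i * e * u := by rw [← hiS]
    have : d * (i * e) = u * (i * e) := by
      calc d * (i * e) = i * d * e := by ring
        _ = i * e * u := hchain
        _ = u * (i * e) := by ring
    exact Nat.eq_of_mul_eq_mul_right (Nat.mul_pos hipos hepos) this
  have hrel_dvd : d ∣ S'.index := by
    rw [hdu, hu]
    exact Subgroup.relIndex_dvd_index_of_le le_sup_left
  have hndvd : ¬ p ∣ d := fun hc => hSindex (hc.trans hrel_dvd)
  have hcardT' : Nat.card T' = Nat.card T :=
    Nat.card_congr (Subgroup.subgroupOfEquivOfLe hTN).toEquiv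
  have hqdvd : p ^ q ∣ i := by
    have hmain : p ^ q ∣ i * d := by rw [hiT, hcardT']; exact hdvd
    exact ((hp.coprime_iff_not_dvd.mpr hndvd).pow_left q).dvd_of_dvd_mul_right hmain
  have hfinal : i = Nat.card ↥(S ⊓ T) := by
    have heq : S' ⊓ T' = (S ⊓ T).subgroupOf N := by
      rw [hS', hT']
      ext z
      simp [Subgroup.mem_subgroupOf]
    rw [hidef, heq]
    exact Nat.card_congr (Subgroup.subgroupOfEquivOfLe (le_trans inf_le_left hSN)).toEquiv
  rwa [hfinal] at hqdvd



lemma arith_key {p t f : ℕ} (hp2 : 2 ≤ p) (hpt : p ≤ t)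
    (h1 : t * p ^ (f / p) ≤ t + f) (h2 : p * t ≤ t + f) :
    p = 2 ∧ t ≤ f ∧ 2 ≤ f ∧ f ≤ 3 ∧ f / p = 1 := by
  set q := f / p with hq
  have hf1 : p ≤ f := by
    have h3 : 2 * t ≤ p * t := Nat.mul_le_mul_right t hp2
    linarith
  have hq1 : 1 ≤ q := (Nat.one_le_div_iff (by omega)).mpr hf1
  have hfq : f < p * q + p := by
    have h := (Nat.div_add_mod f p).symm
    have h2' := Nat.mod_lt f (show 0 < p by omega)
    rw [hq]
    omega
  have hA1 : 1 ≤ p ^ q := Nat.one_le_pow _ _ (by omega)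
  have ht1 : t * (p ^ q - 1) ≤ f := by
    have hsplit : t * p ^ q = t * (p ^ q - 1) + t := by
      calc t * p ^ q = t * ((p ^ q - 1) + 1) := by rw [Nat.sub_add_cancel hA1]
        _ = t * (p ^ q - 1) + t := by ring
    rw [hsplit] at h1
    omega
  have hp2' : p = 2 := by
    by_contra hne
    have hp3 : 3 ≤ p := by omega
    have key1 : ∀ m : ℕ, 1 ≤ m → p * m + 2 * p ≤ p ^ (m + 1) := by
      intro m hm
      induction m with
      | zero => omega
      | succ m IH =>
        rcases Nat.eq_zero_or_pos m with rfl | hm'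
        · have h6 : 3 * p ≤ p * p := Nat.mul_le_mul_right p hp3
          calc p * (0 + 1) + 2 * p = 3 * p := by ring
            _ ≤ p * p := h6
            _ = p ^ (0 + 1 + 1) := by ring
        · have hIH := IH hm'
          have h7 : (p * m + 2 * p) * p ≤ p ^ (m + 1) * p := Nat.mul_le_mul_right p hIH
          calc p * (m + 1) + 2 * p ≤ (p * m + 2 * p) * p := by
                nlinarith [Nat.mul_le_mul_right (p * m) hp3, Nat.mul_le_mul_right p hp3]
            _ ≤ p ^ (m + 1) * p := h7
            _ = p ^ (m + 1 + 1) := (pow_succ p (m + 1)).symm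
    have hk := key1 q hq1
    have htt : p * (p ^ q - 1) ≤ t * (p ^ q - 1) := Nat.mul_le_mul_right _ hpt
    have hsub : p * (p ^ q - 1) + p = p * p ^ q := by
      calc p * (p ^ q - 1) + p = p * ((p ^ q - 1) + 1) := by ring
        _ = p * p ^ q := by rw [Nat.sub_add_cancel hA1]
    have hks : p * q + 2 * p ≤ p * p ^ q := by
      have : p ^ (q + 1) = p * p ^ q := by ring
      omega
    linarith
  subst hp2'
  have hq1' : q = 1 := by
    by_contra hne
    have hq2 : 2 ≤ q := by omega
    have key2 : ∀ m : ℕ, 2 ≤ m → 2 * m + 4 ≤ 2 ^ (m + 1) := by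
      intro m hm
      induction m with
      | zero => omega
      | succ m IH =>
        rcases Nat.lt_or_ge m 2 with hm' | hm'
        · interval_cases m
          · omega
          · norm_num
        · have hIH := IH hm'
          have hpow : 2 ^ (m + 2) = 2 ^ (m + 1) * 2 := pow_succ 2 (m + 1)
          omega
    have hk := key2 q hq2
    have htt : 2 * (2 ^ q - 1) ≤ t * (2 ^ q - 1) := Nat.mul_le_mul_right _ hpt
    have hsub : 2 * (2 ^ q - 1) + 2 = 2 * 2 ^ q := by
      calc 2 * (2 ^ q - 1) + 2 = 2 * ((2 ^ q - 1) + 1) := by ring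
        _ = 2 * 2 ^ q := by rw [Nat.sub_add_cancel hA1]
    have hks : 2 * q + 4 ≤ 2 * 2 ^ q := by
      have : (2:ℕ) ^ (q + 1) = 2 * 2 ^ q := by ring
      omega
    linarith
  refine ⟨rfl, ?_, by omega, by omega, hq1'⟩
  rw [hq1'] at ht1
  simpa using ht1


lemma fixOut_conj_eq {F : Set X} {h v : Perm X} (hh : h ∈ fixOut F)
    (hv : ∀ x ∈ F, v x = x) : h * v * h⁻¹ = v := by
  have hvinv : ∀ x ∈ F, v⁻¹ x = x := by
    intro x hx
    nth_rewrite 1 [← hv x hx]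
    exact Equiv.symm_apply_apply _ _
  have hhinv : h⁻¹ ∈ fixOut F := inv_mem hh
  ext x
  simp only [Equiv.Perm.mul_apply]
  by_cases hx : x ∈ F
  · have h1 : h⁻¹ x ∈ F := fixOut_apply_mem hhinv hx
    rw [hv _ h1, (by simp : h (h⁻¹ x) = x), hv _ hx]
  · have h1 : h⁻¹ x = x := hhinv x hx
    rw [h1]
    have h2 : v x ∉ F := by
      intro hc
      have := hvinv _ hc
      rw [(by simp : v⁻¹ (v x) = x)] at this
      rw [← this] at hc
      exact hx hc
    rw [hh _ h2]

lemma eq_of_card_two {G : Type*} [Group G] [Finite G] {H : Subgroup G}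
    (h2 : Nat.card H = 2) {x y : G} (hx : x ∈ H) (hy : y ∈ H) (hx1 : x ≠ 1) (hy1 : y ≠ 1) :
    x = y := by
  by_contra hne
  have hsub : ({1, x, y} : Set G) ⊆ (H : Set G) := by
    intro z hz
    rcases hz with rfl | rfl | rfl
    · exact one_mem H
    · exact hx
    · exact hy
  have hcard3 : ({1, x, y} : Set G).ncard = 3 := by
    rw [Set.ncard_insert_of_notMem (by simp [hx1.symm, hy1.symm]) (Set.toFinite _),
      Set.ncard_pair hne]
  have hle := Set.ncard_le_ncard hsub (Set.toFinite _)
  rw [hcard3] at hle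
  rw [← Nat.card_coe_set_eq] at hle
  have : Nat.card (H : Set G) = Nat.card H := Nat.card_congr (Equiv.setCongr rfl)
  omega

lemma exists_ne_one_of_card_ne_one {G : Type*} [Group G] [Finite G] {H : Subgroup G}
    (h : Nat.card H ≠ 1) : ∃ x ∈ H, x ≠ 1 := by
  by_contra hall
  push_neg at hall
  apply h
  rw [Subgroup.card_eq_one]
  ext z
  simp only [Subgroup.mem_bot]
  exact ⟨fun hz => hall z hz, fun hz => hz ▸ one_mem H⟩

end Stmt8Aux

/-- `IsPCoreOf p N O` says that O is the largest normal p-subgroup O_p(N) of the subgroup N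
(viewed inside an ambient group G): O ≤ N, O is a p-group, O is normal in N, and every
p-subgroup of N that is normal in N is contained in O. -/
def IsPCoreOf (p : ℕ) {G : Type*} [Group G] (N O : Subgroup G) : Prop :=
  O ≤ N ∧ IsPGroup p O ∧ (∀ g ∈ N, ∀ x ∈ O, g * x * g⁻¹ ∈ O) ∧
    ∀ Q : Subgroup G, Q ≤ N → IsPGroup p Q →
      (∀ g ∈ N, ∀ x ∈ Q, g * x * g⁻¹ ∈ Q) → Q ≤ O

/-- `IsSylowIn p N S` says that S is a Sylow p-subgroup of the subgroup N (viewed inside an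
ambient group G): S is a p-subgroup of N which is maximal among p-subgroups of N. -/
def IsSylowIn (p : ℕ) {G : Type*} [Group G] (N S : Subgroup G) : Prop :=
  S ≤ N ∧ IsPGroup p S ∧
    ∀ Q : Subgroup G, Q ≤ N → IsPGroup p Q → S ≤ Q → Q = S

open Stmt8Aux in
/-- If 1 = P_0 ⊊ P_1 ⊊ … ⊊ P_k ⊆ Σ_X is a radical p-chain of length k ≥ 2 in the symmetric
group of a finite set X with n elements, then either |P_k| > n, or p = 2, n = 5, k = 2 and
the chain consists of the subgroups generated by two disjoint transpositions. -/
theorem stmt8 (p : ℕ) (hp : p.Prime) (X : Type*) [Fintype X] [DecidableEq X]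
    (k : ℕ) (hk : 2 ≤ k)
    (P : Fin (k + 1) → Subgroup (Equiv.Perm X))
    (hP0 : P 0 = ⊥)
    (hmono : ∀ i : Fin k, P i.castSucc < P i.succ)
    (hpgrp : ∀ i, IsPGroup p (P i))
    (hcore : ∀ i : Fin (k + 1), (i : ℕ) ≤ k - 1 →
      IsPCoreOf p (⨅ (j : Fin (k + 1)) (_ : j ≤ i), Subgroup.normalizer (P j : Set (Equiv.Perm X))) (P i))
    (hsyl : IsSylowIn p
      (⨅ (j : Fin (k + 1)) (_ : (j : ℕ) ≤ k - 1), Subgroup.normalizer (P j : Set (Equiv.Perm X)))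
      (P (Fin.last k))) :
    Fintype.card X < Nat.card (P (Fin.last k)) ∨
    (p = 2 ∧ Fintype.card X = 5 ∧ k = 2 ∧
      ∃ a b : Equiv.Perm X, a.IsSwap ∧ b.IsSwap ∧ a.Disjoint b ∧
        P 1 = Subgroup.closure {a} ∧ P (Fin.last k) = Subgroup.closure {a, b}) := by
  classical
  haveI : Fact p.Prime := ⟨hp⟩
  rcases lt_or_ge (Fintype.card X) (Nat.card (P (Fin.last k))) with hbig | hsmall
  · exact Or.inl hbig
  right
  -- basic setup
  have hsm : StrictMono P := Fin.strictMono_iff_lt_succ.mpr hmono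
  have hmonoLe : Monotone P := hsm.monotone
  have hjmlt' : k - 1 < k + 1 := by omega
  set jm : Fin (k+1) := ⟨k-1, hjmlt'⟩ with hjm
  have hjml : jm ≤ Fin.last k := by
    rw [Fin.le_def]
    simp only [Fin.last]
    omega
  have hjmlt : jm < Fin.last k := by
    rw [Fin.lt_def]
    simp only [Fin.val_last, hjm]
    omega
  set K1 := P jm with hK1
  set S := P (Fin.last k) with hSdef
  set N : Subgroup (Equiv.Perm X) :=
    ⨅ (j : Fin (k+1)) (_ : (j : ℕ) ≤ k - 1), Subgroup.normalizer ((P j) : Set (Perm X)) with hN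
  have hNeq : (⨅ (j : Fin (k+1)) (_ : j ≤ jm), Subgroup.normalizer ((P j) : Set (Perm X))) = N := by
    rw [hN]
    apply le_antisymm
    · apply le_iInf; intro j; apply le_iInf; intro hj
      refine le_trans (iInf_le _ j) (iInf_le _ ?_)
      exact hj
    · apply le_iInf; intro j; apply le_iInf; intro hj
      refine le_trans (iInf_le _ j) (iInf_le _ ?_)
      exact hj
  have hcoreKm := hcore jm (by rw [hjm])
  rw [hNeq] at hcoreKm
  have hNle : ∀ i : Fin (k+1), (i : ℕ) ≤ k - 1 → N ≤ Subgroup.normalizer ((P i) : Set (Perm X)) := fun i hi =>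
    le_trans (iInf_le _ i) (iInf_le _ hi)
  -- the LC induction
  have key : ∀ m : ℕ, ∀ hm : m ≤ k - 1, LC (P ⟨m, by omega⟩) := by
    intro m
    induction m using Nat.strong_induction_on with
    | _ m IH =>
    intro hm
    have hmlt : m < k + 1 := by omega
    set j : Fin (k+1) := ⟨m, hmlt⟩ with hj
    have hcj := hcore j (by rw [hj]; exact hm)
    set Nj : Subgroup (Equiv.Perm X) :=
      ⨅ (i : Fin (k+1)) (_ : i ≤ j), Subgroup.normalizer ((P i) : Set (Perm X)) with hNj
    obtain ⟨hPN, hPp, hPnorm, hPmax⟩ := hcj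
    have hNjle : ∀ i : Fin (k+1), i ≤ j → Nj ≤ Subgroup.normalizer ((P i) : Set (Perm X)) := fun i hi =>
      le_trans (iInf_le _ i) (iInf_le _ hi)
    have hR : orbPatch (P j) ⊓ Subgroup.normalizer ((P j) : Set (Perm X)) ≤ Nj := by
      apply le_iInf; intro i; apply le_iInf; intro hi
      rcases eq_or_lt_of_le hi with heq | hlt
      · rw [heq]
        exact inf_le_right
      · have hiLC : LC (P i) := by
          have hival : (i : ℕ) < m := by rwa [Fin.lt_def] at hlt
          have := IH (i : ℕ) hival (by omega)
          exact this
        refine le_trans inf_le_left (orbPatch_le_normalizer_of_LC (hmonoLe hi) hiLC ?_)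
        intro g hg u hu
        have hgn : g ∈ Subgroup.normalizer ((P i) : Set (Perm X)) := (hNjle i hi) (hPN hg)
        exact (Subgroup.mem_normalizer_iff.mp hgn u).mp hu
    have heq := radical_eq_orbPatch hp (P j) Nj hPN (hNjle j le_rfl) hPp hPmax hR
    exact lc_of_orbPatch_le heq.le
  have hK1lc : LC K1 := key (k-1) le_rfl
  -- basic facts about K1 and S
  have hK1p : IsPGroup p K1 := hpgrp jm
  have hSp : IsPGroup p S := hsyl.2.1
  have hSN : S ≤ N := hsyl.1
  have hK1S : K1 ≤ S := hmonoLe hjml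
  have hK1bot : K1 ≠ ⊥ := by
    have h01 : (0 : Fin (k+1)) < jm := by
      rw [Fin.lt_def]
      simp only [Fin.val_zero, hjm]
      omega
    have hlt := hsm h01
    rw [hP0] at hlt
    exact hlt.ne'
  set F := fixS K1 with hF
  set t := (suppS K1).ncard with htdef
  set f := F.ncard with hfdef
  have hFc : F = (suppS K1)ᶜ := by
    ext x
    constructor
    · intro h hc
      obtain ⟨g, hg, hgx⟩ := hc
      exact hgx (h g hg)
    · intro h g hg
      by_contra hc
      exact h ⟨g, hg, hc⟩
  have hn : Fintype.card X = t + f := by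
    have h := Set.ncard_add_ncard_compl (suppS K1)
    rw [Nat.card_eq_fintype_card] at h
    rw [htdef, hfdef, hFc]
    omega
  -- cardinality facts for K1
  have hcard_dvd : Nat.card K1 ∣ t.factorial := card_dvd_factorial_suppS K1
  have hW_ge_t : t ≤ Nat.card K1 := suppS_ncard_le_card K1 hK1lc
  obtain ⟨a0, ha0⟩ := IsPGroup.iff_card.mp hK1p
  have ha0pos : a0 ≠ 0 := by
    intro h
    apply hK1bot
    rw [← Subgroup.card_eq_one, ha0, h, pow_zero]
  have hpdvd : p ∣ Nat.card K1 := by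
    rw [ha0]
    exact dvd_pow_self p ha0pos
  have hpt : p ≤ t := (Nat.Prime.dvd_factorial hp).mp (hpdvd.trans hcard_dvd)
  -- the subgroup T of permutations supported on F
  set T := fixOut F with hT
  have hcardT : Nat.card T = f.factorial := card_fixOut F
  have hK1T : ∀ x, x ∈ K1 → x ∈ T → x = 1 := by
    intro x hx1 hxT
    ext y
    by_cases hy : y ∈ F
    · rw [hy x hx1]; rfl
    · rw [hxT y hy]; rfl
  have hfixPi : ∀ i : Fin (k+1), (i : ℕ) ≤ k - 1 → ∀ u ∈ P i, ∀ x ∈ F, u x = x := by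
    intro i hi u hu x hxF
    exact hxF u (hmonoLe (show i ≤ jm by rw [Fin.le_def]; exact hi) hu)
  have hTN : T ≤ N := by
    apply le_iInf; intro i; apply le_iInf; intro hi
    intro h hh
    rw [Subgroup.mem_normalizer_iff]
    intro u
    constructor
    · intro hu
      rw [fixOut_conj_eq hh (hfixPi i hi u hu)]
      exact hu
    · intro hu
      have hres := fixOut_conj_eq (inv_mem hh) (hfixPi i hi _ hu)
      simp only [inv_inv] at hres
      have : h⁻¹ * (h * u * h⁻¹) * h = u := by group
      rw [← this]
      rw [hres] at this ⊢
      exact hu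
  have hNF : ∀ g ∈ N, ∀ x ∈ F, g x ∈ F := by
    intro g hg x hxF
    intro u hu
    have hgn : g ∈ Subgroup.normalizer (K1 : Set (Perm X)) := hNle jm le_rfl hg
    have hconj : g⁻¹ * u * g ∈ K1 := by
      have := (Subgroup.mem_normalizer_iff.mp (inv_mem hgn) u).mp hu
      simpa using this
    have := hxF _ hconj
    have h2 : u (g x) = g ((g⁻¹ * u * g) x) := by simp [Equiv.Perm.mul_apply]
    rw [h2, this]
  have hTconj : ∀ g ∈ N, ∀ h' ∈ T, g * h' * g⁻¹ ∈ T := by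
    intro g hg h' hh'
    intro x hx
    have hginv : g⁻¹ x ∉ F := by
      intro hc
      have := hNF g hg _ hc
      rw [(by simp : g (g⁻¹ x) = x)] at this
      exact hx this
    simp only [Equiv.Perm.mul_apply]
    rw [hh' _ hginv, (by simp : g (g⁻¹ x) = x)]
  -- Sylow intersection bound
  have hq_dvd : p ^ (f / p) ∣ Nat.card ↥(S ⊓ T) :=
    sylow_inf_card hp N S T hSN hTN hSp hsyl.2.2 hTconj
      (by rw [hcardT]; exact pow_div_dvd_factorial hp f)
  have hST_pos : p ^ (f / p) ≤ Nat.card ↥(S ⊓ T) := Nat.le_of_dvd Nat.card_pos hq_dvd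
  have hprod : Nat.card K1 * Nat.card ↥(S ⊓ T) ≤ Nat.card S :=
    card_mul_card_le_of_inj hK1S inf_le_left (fun x hx hxst => hK1T x hx hxst.2)
  have hstep : p * Nat.card K1 ≤ Nat.card S := card_step hp hK1p hSp (hsm hjmlt)
  have hSn : Nat.card S ≤ t + f := by rw [← hn]; exact hsmall
  have h1 : t * p ^ (f / p) ≤ t + f :=
    le_trans (Nat.mul_le_mul hW_ge_t hST_pos) (hprod.trans hSn)
  have h2 : p * t ≤ t + f :=
    le_trans (Nat.mul_le_mul_left p hW_ge_t) (hstep.trans hSn)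
  obtain ⟨hp2, htf, hf2, hf3, hfq1⟩ := arith_key hp.two_le hpt h1 h2
  subst hp2
  -- exclude f = 2
  have hf3' : f = 3 := by
    rcases (by omega : f = 2 ∨ f = 3) with h2f | h3f
    · exfalso
      have hTp : IsPGroup 2 T := by
        apply IsPGroup.of_card (n := 1)
        rw [hcardT, h2f]
        norm_num [Nat.factorial]
      have hTK1 : T ≤ K1 := hcoreKm.2.2.2 T hTN hTp hTconj
      obtain ⟨x, hxT, hx1⟩ := exists_ne_one_of_card_ne_one (H := T)
        (by rw [hcardT, h2f]; norm_num [Nat.factorial])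
      exact hx1 (hK1T x (hTK1 hxT) hxT)
    · exact h3f
  have ht2 : t = 2 := by
    rcases (by omega : t = 2 ∨ t = 3) with h | h
    · exact h
    · exfalso
      rw [h] at hcard_dvd hW_ge_t
      rw [ha0] at hcard_dvd hW_ge_t
      have h6 : (2:ℕ) ^ a0 ∣ 6 := by
        have h36 : (3:ℕ).factorial = 6 := by norm_num [Nat.factorial]
        rwa [h36] at hcard_dvd
      have hle6 : (2:ℕ) ^ a0 ≤ 6 := Nat.le_of_dvd (by norm_num) h6
      have ha2 : a0 = 2 := by
        rcases Nat.lt_or_ge a0 2 with hlt | hge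
        · have : (2:ℕ) ^ a0 ≤ 2 ^ 1 := Nat.pow_le_pow_right (by norm_num) (by omega)
          omega
        · have h3 : a0 < 3 := by
            by_contra hc
            push_neg at hc
            have : (2:ℕ) ^ 3 ≤ 2 ^ a0 := Nat.pow_le_pow_right (by norm_num) hc
            omega
          omega
      rw [ha2] at h6
      norm_num at h6
  have hn5 : Fintype.card X = 5 := by rw [hn, ht2, hf3']
  have hcardK1 : Nat.card K1 = 2 := by
    have h2f : Nat.factorial t = 2 := by rw [ht2]; norm_num [Nat.factorial]
    rw [h2f] at hcard_dvd
    have hle := Nat.le_of_dvd (by norm_num) hcard_dvd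
    omega
  -- k = 2
  have hgrow : ∀ m : ℕ, ∀ _hm : m ≤ k, 2 ^ m ≤ Nat.card (P ⟨m, by omega⟩) := by
    intro m
    induction m with
    | zero =>
      intro hm
      exact Nat.card_pos (α := ↥(P ⟨0, by omega⟩))
    | succ m IH =>
      intro hm
      have hltP : P ⟨m, by omega⟩ < P ⟨m+1, by omega⟩ := by
        apply hsm
        rw [Fin.lt_def]
        exact Nat.lt_succ_self m
      have hcs := card_step hp (hpgrp _) (hpgrp _) hltP
      have hIH := IH (by omega)
      calc 2 ^ (m+1) = 2 * 2 ^ m := by ring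
        _ ≤ 2 * Nat.card (P ⟨m, by omega⟩) := Nat.mul_le_mul_left 2 hIH
        _ ≤ Nat.card (P ⟨m+1, by omega⟩) := hcs
  have hk2 : k = 2 := by
    have h := hgrow (k-1) (by omega)
    have heqj : (⟨k-1, by omega⟩ : Fin (k+1)) = jm := rfl
    rw [heqj] at h
    rw [← hK1, hcardK1] at h
    have hk1 : k - 1 < 2 := by
      by_contra hc
      push_neg at hc
      have : (2:ℕ) ^ 2 ≤ 2 ^ (k-1) := Nat.pow_le_pow_right (by norm_num) hc
      omega
    omega
  -- elements a and b
  obtain ⟨a, haK1, ha1⟩ := exists_ne_one_of_card_ne_one (H := K1) (by rw [hcardK1]; norm_num)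
  have hA_eq : ∀ g ∈ K1, g ≠ 1 → g = a := fun g hg hg1 => eq_of_card_two hcardK1 hg haK1 hg1 ha1
  have hafix : ∀ x ∈ F, a x = x := fun x hx => hx a haK1
  have hsupp_a : (↑a.support : Set X) = suppS K1 := by
    ext x
    simp only [Finset.coe_insert, Finset.mem_coe, Equiv.Perm.mem_support]
    constructor
    · intro hx
      exact ⟨a, haK1, hx⟩
    · rintro ⟨g, hg, hgx⟩
      have hg1 : g ≠ 1 := by
        intro hgg
        rw [hgg] at hgx
        exact hgx rfl
      rw [← hA_eq g hg hg1]
      exact hgx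
  have hswap_a : a.IsSwap := by
    rw [← Equiv.Perm.card_support_eq_two]
    have h2 : (↑a.support : Set X).ncard = 2 := by
      rw [hsupp_a, ← htdef, ht2]
    rwa [Set.ncard_coe_finset] at h2
  have hST2 : 2 ≤ Nat.card ↥(S ⊓ T) := by
    have := hST_pos
    rwa [hfq1, pow_one] at this
  obtain ⟨b0, hb0⟩ := IsPGroup.iff_card.mp hSp
  have hS4 : Nat.card S = 4 := by
    have hge : 4 ≤ Nat.card S := by
      calc (4:ℕ) = 2 * 2 := by norm_num
        _ ≤ Nat.card K1 * Nat.card ↥(S ⊓ T) := Nat.mul_le_mul (by omega) hST2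
        _ ≤ Nat.card S := hprod
    have hle : Nat.card S ≤ 5 := by omega
    rw [hb0] at hge hle ⊢
    have hb2 : b0 < 3 := by
      by_contra hc
      push_neg at hc
      have : (2:ℕ) ^ 3 ≤ 2 ^ b0 := Nat.pow_le_pow_right (by norm_num) hc
      omega
    have hb1 : 1 < b0 := by
      by_contra hc
      push_neg at hc
      have : (2:ℕ) ^ b0 ≤ 2 ^ 1 := Nat.pow_le_pow_right (by norm_num) hc
      omega
    have : b0 = 2 := by omega
    rw [this]
    norm_num
  have hcardM : Nat.card ↥(S ⊓ T) = 2 := by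
    have hd1 : Nat.card ↥(S ⊓ T) ∣ Nat.card S := Subgroup.card_dvd_of_le inf_le_left
    have hd2 : Nat.card ↥(S ⊓ T) ∣ Nat.card T := Subgroup.card_dvd_of_le inf_le_right
    rw [hS4] at hd1
    rw [hcardT, hf3'] at hd2
    have h6 : Nat.factorial 3 = 6 := by norm_num [Nat.factorial]
    rw [h6] at hd2
    have hgcd := Nat.dvd_gcd hd1 hd2
    have hg2 : Nat.gcd 4 6 = 2 := by norm_num
    rw [hg2] at hgcd
    have := Nat.le_of_dvd (by norm_num) hgcd
    omega
  obtain ⟨b, hbM, hb1⟩ := exists_ne_one_of_card_ne_one (H := S ⊓ T) (by rw [hcardM]; norm_num)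
  have hbT : b ∈ T := hbM.2
  have hbF : ∀ x ∉ F, b x = x := hbT
  have hbsq : ∀ x, b (b x) = x := by
    have hb2 := pow_card_eq_one' (G := ↥(S ⊓ T)) (x := ⟨b, hbM⟩)
    rw [hcardM] at hb2
    have hb2' : (b : Perm X) ^ 2 = 1 := by
      have := congrArg Subtype.val hb2
      simpa using this
    intro x
    have := congrArg (fun (q : Perm X) => q x) hb2'
    simpa [pow_two, Equiv.Perm.mul_apply] using this
  obtain ⟨x₀, hbx₀⟩ : ∃ x, b x ≠ x := by
    by_contra hc
    push_neg at hc
    exact hb1 (Equiv.ext hc)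
  have hx₀F : x₀ ∈ F := by
    by_contra h
    exact hbx₀ (hbF x₀ h)
  have hx₁F : b x₀ ∈ F := fixOut_apply_mem hbT hx₀F
  have hx01 : b x₀ ≠ x₀ := hbx₀
  have hbx₁ : b (b x₀) = x₀ := hbsq x₀
  have hsuppb : b.support = {x₀, b x₀} := by
    ext y
    simp only [Equiv.Perm.mem_support, Finset.mem_insert, Finset.mem_singleton]
    constructor
    · intro hy
      by_contra hne
      push_neg at hne
      obtain ⟨hne0, hne1⟩ := hne
      have hyF : y ∈ F := by
        by_contra h
        exact hy (hbF y h)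
      have hbyF : b y ∈ F := fixOut_apply_mem hbT hyF
      have hby0 : b y ≠ x₀ := by
        intro h
        apply hne1
        calc y = b (b y) := (hbsq y).symm
          _ = b x₀ := by rw [h]
      have hby1 : b y ≠ b x₀ := fun h => hne0 (b.injective h)
      have hsub4 : ({x₀, b x₀, y, b y} : Set X) ⊆ F := by
        intro z hz
        simp only [Set.mem_insert_iff, Set.mem_singleton_iff] at hz
        rcases hz with rfl | rfl | rfl | rfl
        · exact hx₀F
        · exact hx₁F
        · exact hyF
        · exact hbyF
      have hcard4 : ({x₀, b x₀, y, b y} : Set X).ncard = 4 := by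
        have h1 : x₀ ∉ ({b x₀, y, b y} : Set X) := by
          simp only [Set.mem_insert_iff, Set.mem_singleton_iff]
          push_neg
          exact ⟨fun h => hx01 h.symm, fun h => hne0 h.symm, fun h => hby0 h.symm⟩
        have h2 : b x₀ ∉ ({y, b y} : Set X) := by
          simp only [Set.mem_insert_iff, Set.mem_singleton_iff]
          push_neg
          exact ⟨fun h => hne1 h.symm, fun h => hby1 h.symm⟩
        rw [Set.ncard_insert_of_notMem h1 (Set.toFinite _),
          Set.ncard_insert_of_notMem h2 (Set.toFinite _),
          Set.ncard_pair (fun h => hy h.symm)]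
      have hle4 := Set.ncard_le_ncard hsub4 (Set.toFinite _)
      rw [hcard4, ← hfdef, hf3'] at hle4
      omega
    · intro hy
      rcases hy with rfl | rfl
      · exact hbx₀
      · rw [hbx₁]
        exact fun h => hx01 h.symm
  have hswap_b : b.IsSwap := by
    rw [← Equiv.Perm.card_support_eq_two, hsuppb]
    rw [Finset.card_insert_of_notMem (by simpa using fun h => hx01 h.symm),
      Finset.card_singleton]
  have hdisj : a.Disjoint b := by
    intro x
    by_cases hx : x ∈ F
    · exact Or.inl (hafix x hx)
    · exact Or.inr (hbF x hx)
  -- closures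
  have hclA : Subgroup.closure {a} = K1 := by
    apply sub_eq_of_le_card
    · rw [Subgroup.closure_le]
      intro z hz
      rw [Set.mem_singleton_iff] at hz
      exact hz ▸ haK1
    · rw [hcardK1]
      have hmem : a ∈ Subgroup.closure ({a} : Set (Perm X)) := Subgroup.subset_closure rfl
      have hne : Subgroup.closure ({a} : Set (Perm X)) ≠ ⊥ := by
        intro hbot
        rw [hbot, Subgroup.mem_bot] at hmem
        exact ha1 hmem
      have h1 : Nat.card (Subgroup.closure ({a} : Set (Perm X))) ≠ 1 := by
        intro hone
        exact hne (Subgroup.card_eq_one.mp hone)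
      have := Nat.card_pos (α := ↥(Subgroup.closure ({a} : Set (Perm X))))
      omega
  have hclAB : Subgroup.closure {a, b} = S := by
    apply sub_eq_of_le_card
    · rw [Subgroup.closure_le]
      intro z hz
      simp only [Set.mem_insert_iff, Set.mem_singleton_iff] at hz
      rcases hz with rfl | rfl
      · exact hK1S haK1
      · exact hbM.1
    · rw [hS4]
      have hma : a ∈ Subgroup.closure ({a, b} : Set (Perm X)) :=
        Subgroup.subset_closure (by simp)
      have hmb : b ∈ Subgroup.closure ({a, b} : Set (Perm X)) :=
        Subgroup.subset_closure (by simp)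
      have hab : a ≠ b := by
        intro h
        exact hbx₀ (h ▸ hafix x₀ hx₀F)
      have habne1 : a * b ≠ 1 := by
        intro h
        have h1 : (a * b) x₀ = b x₀ := by
          simp only [Equiv.Perm.mul_apply]
          exact hafix _ hx₁F
        rw [h] at h1
        exact hbx₀ (by simpa using h1.symm)
      have habnea : a * b ≠ a := fun h => hb1 (mul_left_cancel (h.trans (mul_one a).symm))
      have habneb : a * b ≠ b := fun h => ha1 (mul_right_cancel (h.trans (one_mul b).symm))
      have hsub4 : ({1, a, b, a*b} : Set (Perm X)) ⊆
          (Subgroup.closure ({a, b} : Set (Perm X)) : Set (Perm X)) := by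
        intro z hz
        simp only [Set.mem_insert_iff, Set.mem_singleton_iff] at hz
        rcases hz with rfl | rfl | rfl | rfl
        · exact one_mem _
        · exact hma
        · exact hmb
        · exact mul_mem hma hmb
      have hcard4 : ({1, a, b, a*b} : Set (Perm X)).ncard = 4 := by
        have h1 : (1 : Perm X) ∉ ({a, b, a*b} : Set (Perm X)) := by
          simp only [Set.mem_insert_iff, Set.mem_singleton_iff]
          push_neg
          exact ⟨fun h => ha1 h.symm, fun h => hb1 h.symm, fun h => habne1 h.symm⟩
        have h2 : a ∉ ({b, a*b} : Set (Perm X)) := by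
          simp only [Set.mem_insert_iff, Set.mem_singleton_iff]
          push_neg
          exact ⟨hab, fun h => habnea h.symm⟩
        rw [Set.ncard_insert_of_notMem h1 (Set.toFinite _),
          Set.ncard_insert_of_notMem h2 (Set.toFinite _),
          Set.ncard_pair (fun h => habneb h.symm)]
      have hle4 := Set.ncard_le_ncard hsub4 (Set.toFinite _)
      rw [hcard4, ← Nat.card_coe_set_eq] at hle4
      exact hle4
  -- conclusion
  refine ⟨rfl, hn5, hk2, a, b, hswap_a, hswap_b, hdisj, ?_, hclAB.symm⟩
  have hjm1 : (1 : Fin (k+1)) = jm := by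
    apply Fin.ext
    rw [hjm]
    simp only [Fin.val_one']
    rw [Nat.mod_eq_of_lt (by omega)]
    omega
  rw [hjm1]
  exact hclA.symm
end
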